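/- arXiv:0802.1545 — 10 statements merged into one kernel-verified Lean document; each statement's English description precedes it below -/
import Mathlib

section
/- Let k be an algebraically closed field of characteristic zero and let X and Y be n×n matrices over k satisfying X*Y − Y*X = Y^2. Then the matrix Y is nilpotent. -/
open Module LinearMap

section Aux

variable {k V : Type*} [Field k] [AddCommGroup V] [Module k V]

lemma aux_comm_pow (f g : Module.End k V) (h : g * f - f * g = f ^ 2) (μ : k) (m : ℕ) :
    (f - μ • 1) ^ (m + 1) * g
      = g * (f - μ • 1) ^ (m + 1) - (m + 1 : ℕ) • (f ^ 2 * (f - μ • 1) ^ m) := by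
  set D := f - μ • 1 with hDdef
  have h2 : D * g = g * D - f ^ 2 := by
    rw [hDdef]; linear_combination (norm := noncomm_ring) -h
  have hD : D * f ^ 2 = f ^ 2 * D := by rw [hDdef]; noncomm_ring
  induction m with
  | zero => simpa using h2
  | succ m ih =>
      calc D ^ (m + 2) * g
          = D * (D ^ (m + 1) * g) := by rw [pow_succ', mul_assoc]
        _ = D * (g * D ^ (m + 1)) - (m + 1 : ℕ) • (D * (f ^ 2 * D ^ m)) := by
              rw [ih, mul_sub, mul_smul_comm]
        _ = (D * g) * D ^ (m + 1) - (m + 1 : ℕ) • (f ^ 2 * D ^ (m + 1)) := by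
              rw [show D * (f ^ 2 * D ^ m) = f ^ 2 * D ^ (m + 1) by
                    rw [← mul_assoc, hD, mul_assoc, ← pow_succ'], ← mul_assoc]
        _ = (g * D - f ^ 2) * D ^ (m + 1) - (m + 1 : ℕ) • (f ^ 2 * D ^ (m + 1)) := by rw [h2]
        _ = g * D ^ (m + 2) - (m + 2 : ℕ) • (f ^ 2 * D ^ (m + 1)) := by
              have hs : (m + 2 : ℕ) • (f ^ 2 * D ^ (m + 1))
                  = (m + 1 : ℕ) • (f ^ 2 * D ^ (m + 1)) + f ^ 2 * D ^ (m + 1) := by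
                rw [show m + 2 = (m + 1) + 1 from rfl, succ_nsmul]
              rw [sub_mul, mul_assoc, ← pow_succ', hs, sub_sub]
              congr 1
              rw [add_comm]

lemma aux_mapsTo (f g : Module.End k V) (h : g * f - f * g = f ^ 2) (μ : k) :
    Set.MapsTo g ↑(f.maxGenEigenspace μ) ↑(f.maxGenEigenspace μ) := by
  intro x hx
  rw [SetLike.mem_coe, Module.End.mem_maxGenEigenspace] at hx ⊢
  obtain ⟨m, hm⟩ := hx
  refine ⟨m + 1, ?_⟩
  have := congrArg (fun T : Module.End k V => T x) (aux_comm_pow f g h μ m)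
  simp only [LinearMap.sub_apply, Module.End.mul_apply, LinearMap.smul_apply] at this ⊢
  rw [this]
  have h1 : ((f - μ • 1) ^ (m + 1)) x = 0 := by
    rw [pow_succ', Module.End.mul_apply, hm, map_zero]
  rw [h1, hm]
  simp

end Aux

section Main

variable {k V : Type*} [Field k] [AddCommGroup V] [Module k V] [FiniteDimensional k V]

lemma aux_eigenvalue_zero [CharZero k] (f g : Module.End k V)
    (h : g * f - f * g = f ^ 2) (μ : k) (hμ : f.HasEigenvalue μ) : μ = 0 := by
  set G := f.maxGenEigenspace μ with hG
  have hf : Set.MapsTo f ↑G ↑G :=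
    Module.End.mapsTo_maxGenEigenspace_of_comm (Commute.refl f) μ
  have hg : Set.MapsTo g ↑G ↑G := aux_mapsTo f g h μ
  set f' := f.restrict hf with hf'
  set g' := g.restrict hg with hg'
  have h' : g' * f' - f' * g' = f' ^ 2 := by
    ext x
    have := congrArg (fun T : Module.End k V => T (x : V)) h
    simp only [LinearMap.sub_apply, Module.End.mul_apply, pow_two] at this
    simp [hf', hg', LinearMap.restrict_apply, LinearMap.coe_restrict_apply, pow_two, this]
    exact this
  have ht : LinearMap.trace k G (f' ^ 2) = 0 := by
    rw [← h', map_sub, LinearMap.trace_mul_comm, sub_self]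
  have hmaps : Set.MapsTo (f - algebraMap k (Module.End k V) μ) ↑G ↑G :=
    Module.End.mapsTo_maxGenEigenspace_of_comm (Algebra.mul_sub_algebraMap_commutes f μ) μ
  have hNnil : IsNilpotent ((f - algebraMap k (Module.End k V) μ).restrict hmaps) :=
    Module.End.isNilpotent_restrict_maxGenEigenspace_sub_algebraMap f μ
  set N : Module.End k G := f' - μ • 1 with hN
  have hNe : (f - algebraMap k (Module.End k V) μ).restrict hmaps = N := by
    ext x
    simp [hN, hf', LinearMap.restrict_apply, LinearMap.coe_restrict_apply, Module.algebraMap_end_apply]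
    change (f - algebraMap k (Module.End k V) μ) (x : V) = f x - μ • (x : V)
    simp [Module.algebraMap_end_apply]
  rw [hNe] at hNnil
  have htrN : LinearMap.trace k G N = 0 := by
    have := LinearMap.isNilpotent_trace_of_isNilpotent hNnil
    exact this.eq_zero
  have htrN2 : LinearMap.trace k G (N * N) = 0 := by
    have : IsNilpotent (N * N) := by
      obtain ⟨r, hr⟩ := hNnil
      refine ⟨r, ?_⟩
      rw [← pow_two, ← pow_mul, mul_comm 2 r, pow_mul, hr]
      simp
    exact (LinearMap.isNilpotent_trace_of_isNilpotent this).eq_zero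
  have hexp : f' ^ 2 = (μ * μ) • (1 : Module.End k G) + (2 * μ) • N + N * N := by
    have : f' = μ • 1 + N := by rw [hN]; abel
    rw [this]
    simp only [pow_two]
    rw [add_mul, mul_add, mul_add]
    simp only [smul_mul_assoc, mul_smul_comm, one_mul, mul_one, smul_smul]
    module
  have htr : (μ * μ) * (Module.finrank k G : k) = 0 := by
    have := ht
    rw [hexp, map_add, map_add, map_smul, map_smul, LinearMap.trace_one, htrN, htrN2] at this
    simpa [smul_eq_mul] using this
  have hGne : G ≠ ⊥ := by
    have h1 : f.genEigenspace μ 1 ≠ ⊥ := hμ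
    intro hbot
    exact h1 (le_bot_iff.mp (hbot ▸ (f.genEigenspace μ).monotone le_top))
  have hd : (Module.finrank k G : k) ≠ 0 := by
    have : Nontrivial G := Submodule.nontrivial_iff_ne_bot.mpr hGne
    exact (Nat.cast_ne_zero (R := k)).mpr Module.finrank_pos.ne'
  have : μ * μ = 0 := by
    rcases mul_eq_zero.mp htr with h0 | h0
    · exact h0
    · exact absurd h0 hd
  exact mul_self_eq_zero.mp this

end Main

section Main2
variable {k V : Type*} [Field k] [AddCommGroup V] [Module k V] [FiniteDimensional k V]

open Polynomial in
lemma aux_nilpotent_of_eigenvalues_zero [IsAlgClosed k] (f : Module.End k V)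
    (hall : ∀ μ : k, f.HasEigenvalue μ → μ = 0) : IsNilpotent f := by
  set p := minpoly k f with hp
  have hInt : IsIntegral k f := Algebra.IsIntegral.isIntegral (R := k) f
  have hmonic : p.Monic := minpoly.monic hInt
  have hsplit : p.Splits := IsAlgClosed.splits p
  have hfac : p = (p.roots.map fun a => X - C a).prod :=
    hsplit.eq_prod_roots_of_monic hmonic
  have hroots : ∀ a ∈ p.roots, a = 0 := by
    intro a ha
    exact hall a (Module.End.hasEigenvalue_of_isRoot (isRoot_of_mem_roots ha))
  have hX : p = X ^ p.roots.card := by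
    calc p = (p.roots.map fun a => X - C a).prod := hfac
      _ = (p.roots.map fun _ => (X : k[X])).prod := by
          congr 1
          refine Multiset.map_congr rfl ?_
          intro a ha
          rw [hroots a ha, map_zero, sub_zero]
      _ = X ^ p.roots.card := by
          rw [Multiset.map_const', Multiset.prod_replicate]
  refine ⟨p.roots.card, ?_⟩
  have := minpoly.aeval k f
  rw [← hp, hX] at this
  simpa using this

end Main2

/-- Let `k` be an algebraically closed field of characteristic zero and let
`X` and `Y` be `n × n` matrices over `k` satisfying `X*Y - Y*X = Y^2`.
Then the matrix `Y` is nilpotent. -/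
theorem jordanian_Y_nilpotent (k : Type*) [Field k] [IsAlgClosed k] [CharZero k]
    (n : ℕ) (hn : 1 ≤ n) (X Y : Matrix (Fin n) (Fin n) k)
    (h : X * Y - Y * X = Y ^ 2) : IsNilpotent Y := by
  let e := Matrix.toLinAlgEquiv' (R := k) (n := Fin n)
  set f := e Y with hf
  set g := e X with hg
  have h' : g * f - f * g = f ^ 2 := by
    rw [hf, hg, ← map_mul, ← map_mul, ← map_sub, ← map_pow, h]
  have hall : ∀ μ : k, Module.End.HasEigenvalue f μ → μ = 0 := fun μ hμ =>
    aux_eigenvalue_zero f g h' μ hμ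
  have hnil : IsNilpotent f := aux_nilpotent_of_eigenvalues_zero f hall
  obtain ⟨m, hm⟩ := hnil
  refine ⟨m, e.injective ?_⟩
  rw [map_pow, ← hf, hm, map_zero]
end

section
/- Let X and Y be n×n matrices over an algebraically closed field k of characteristic zero, and set Z = X*Y − Y*X. If Z commutes with Y (Z*Y = Y*Z), then Z is nilpotent. -/
open LinearMap Module Set

section TraceAux

variable {K V : Type*} [Field K] [AddCommGroup V] [Module K V] [FiniteDimensional K V]

/-- Trace of the restriction of `f ^ m` to the generalized `μ`-eigenspace is `μ^m * dim`. -/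
lemma trace_pow_restrict_maxGenEigenspace (f : Module.End K V) (μ : K) (m : ℕ)
    (h : MapsTo f ↑(f.maxGenEigenspace μ) ↑(f.maxGenEigenspace μ)) :
    trace K _ ((f.restrict h) ^ m) = μ ^ m * (finrank K (f.maxGenEigenspace μ) : K) := by
  induction m with
  | zero => simp [trace_one]
  | succ m ih =>
      have hg : IsNilpotent (f.restrict h - algebraMap K _ μ) := by
        have hnil := f.isNilpotent_restrict_maxGenEigenspace_sub_algebraMap μ
        convert hnil using 1
        ext x
        rfl
      have hco : Commute ((f.restrict h) ^ m) (f.restrict h) := (Commute.refl _).pow_left m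
      rw [pow_succ, Module.End.mul_eq_comp,
        trace_comp_eq_mul_of_commute_of_isNilpotent μ hco hg, ih]
      ring

/-- An endomorphism over an algebraically closed field of characteristic zero, all of whose
positive powers have zero trace, is nilpotent. -/
lemma isNilpotent_of_forall_trace_pow_eq_zero [IsAlgClosed K] [CharZero K]
    (f : Module.End K V) (htr : ∀ m : ℕ, 1 ≤ m → trace K V (f ^ m) = 0) :
    IsNilpotent f := by
  classical
  have hT : ⨆ μ : K, f.maxGenEigenspace μ = ⊤ := Module.End.iSup_maxGenEigenspace_eq_top f
  have hds := DirectSum.isInternal_submodule_of_iSupIndep_of_iSup_eq_top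
    f.independent_maxGenEigenspace hT
  have hfin : {μ : K | f.maxGenEigenspace μ ≠ ⊥}.Finite :=
    WellFoundedGT.finite_ne_bot_of_iSupIndep f.independent_maxGenEigenspace
  have hmap : ∀ (m : ℕ) (μ : K),
      MapsTo (f ^ m) ↑(f.maxGenEigenspace μ) ↑(f.maxGenEigenspace μ) := fun m μ ↦
    Module.End.mapsTo_maxGenEigenspace_of_comm ((Commute.refl f).pow_right m) μ
  -- power sums of eigenvalues (weighted by multiplicity) vanish
  have key : ∀ m : ℕ, 1 ≤ m →
      ∑ μ ∈ hfin.toFinset, μ ^ m * (finrank K (f.maxGenEigenspace μ) : K) = 0 := by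
    intro m hm
    have h1 := trace_eq_sum_trace_restrict' hds hfin (hmap m)
    rw [htr m hm] at h1
    have hm1 : ∀ μ : K, MapsTo f ↑(f.maxGenEigenspace μ) ↑(f.maxGenEigenspace μ) :=
      fun μ ↦ Module.End.mapsTo_maxGenEigenspace_of_comm (Commute.refl f) μ
    have h2 : ∀ μ : K, trace K _ ((f ^ m).restrict (hmap m μ)) =
        μ ^ m * (finrank K (f.maxGenEigenspace μ) : K) := by
      intro μ
      have e : (f ^ m).restrict (hmap m μ) = (f.restrict (hm1 μ)) ^ m :=
        (Module.End.pow_restrict m (hm1 μ)).symm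
      rw [e]
      exact trace_pow_restrict_maxGenEigenspace f μ m (hm1 μ)
    rw [Finset.sum_congr rfl fun μ _ ↦ h2 μ] at h1
    exact h1.symm
  -- all nonzero eigenvalues die by a Vandermonde argument
  have hzero : ∀ μ : K, μ ≠ 0 → f.maxGenEigenspace μ = ⊥ := by
    intro μ hμ
    by_contra hne
    set T : Finset K := hfin.toFinset.filter (· ≠ 0) with hTdef
    have hμT : μ ∈ T := by
      simp [hTdef, hμ, hne]
    set r : ℕ := T.card
    let e : Fin r ≃ {x // x ∈ T} := (T.equivFin).symm
    set t : Fin r → K := fun i ↦ (e i : K) with ht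
    have htinj : Function.Injective t := fun i j hij ↦ by
      apply e.injective; exact Subtype.ext hij
    have htne : ∀ i, t i ≠ 0 := fun i ↦ (Finset.mem_filter.mp (e i).2).2
    set d : Fin r → K := fun i ↦ (finrank K (f.maxGenEigenspace (t i)) : K) * t i with hd
    have hsum : ∀ i : Fin r, ∑ j : Fin r, d j * t j ^ (i : ℕ) = 0 := by
      intro i
      have hk := key (i + 1) (Nat.le_add_left 1 i)
      have hsplit : ∑ μ ∈ hfin.toFinset, μ ^ ((i : ℕ) + 1) * (finrank K (f.maxGenEigenspace μ) : K)
          = ∑ μ ∈ T, μ ^ ((i : ℕ) + 1) * (finrank K (f.maxGenEigenspace μ) : K) := by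
        rw [hTdef]
        refine (Finset.sum_filter_of_ne ?_).symm
        intro x _ hx
        intro hx0
        apply hx
        rw [hx0, zero_pow (Nat.succ_ne_zero _), zero_mul]
      rw [hsplit] at hk
      calc ∑ j : Fin r, d j * t j ^ (i : ℕ)
          = ∑ j : Fin r,
              (t j) ^ ((i : ℕ) + 1) * (finrank K (f.maxGenEigenspace (t j)) : K) := by
            refine Finset.sum_congr rfl fun j _ ↦ ?_
            simp only [hd]
            ring
        _ = ∑ x : {x // x ∈ T},
              (x : K) ^ ((i : ℕ) + 1) * (finrank K (f.maxGenEigenspace (x : K)) : K) :=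
            Equiv.sum_comp e (fun x : {x // x ∈ T} ↦ (x : K) ^ ((i : ℕ) + 1) * (finrank K (f.maxGenEigenspace (x : K)) : K))
        _ = ∑ μ ∈ T, μ ^ ((i : ℕ) + 1) * (finrank K (f.maxGenEigenspace μ) : K) :=
            Finset.sum_coe_sort T (fun μ : K ↦ μ ^ ((i : ℕ) + 1) * (finrank K (f.maxGenEigenspace μ) : K))
        _ = 0 := hk
    have hdz : d = 0 :=
      Matrix.eq_zero_of_forall_pow_sum_mul_pow_eq_zero htinj hsum
    -- but d at the index of μ is nonzero
    obtain ⟨iμ, hiμ⟩ : ∃ i, t i = μ := ⟨e.symm ⟨μ, hμT⟩, by simp [ht, e]⟩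
    have h0 : (finrank K (f.maxGenEigenspace (t iμ)) : K) * t iμ = 0 := congrFun hdz iμ
    rw [hiμ] at h0
    rcases mul_eq_zero.mp h0 with h' | h'
    · have : finrank K (f.maxGenEigenspace μ) = 0 := by exact_mod_cast h'
      exact hne (Submodule.finrank_eq_zero.mp this)
    · exact hμ h'
  -- hence the whole space is the generalized 0-eigenspace
  have htop : f.maxGenEigenspace 0 = ⊤ := by
    rw [← hT]
    apply le_antisymm (le_iSup _ 0)
    apply iSup_le
    intro μ
    rcases eq_or_ne μ 0 with rfl | hμ
    · exact le_rfl
    · rw [hzero μ hμ]; exact bot_le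
  -- and f restricted to it (i.e. f itself) is nilpotent
  obtain ⟨N, hN⟩ := f.isNilpotent_restrict_maxGenEigenspace_sub_algebraMap (0 : K)
  erw [Module.End.pow_restrict] at hN
  refine ⟨N, ?_⟩
  ext x
  have hx : x ∈ f.maxGenEigenspace 0 := htop ▸ Submodule.mem_top
  have h1 := DFunLike.congr_fun hN ⟨x, hx⟩
  rw [LinearMap.restrict_apply] at h1
  have h0 : ((f - algebraMap K (Module.End K V) 0) ^ N) x = 0 := congrArg Subtype.val h1
  simpa using h0

end TraceAux

lemma trace_toLinAlgEquiv' {K : Type*} [CommRing K] {n : ℕ} (A : Matrix (Fin n) (Fin n) K) :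
    trace K (Fin n → K) (Matrix.toLinAlgEquiv' A) = Matrix.trace A := by
  rw [trace_eq_matrix_trace K (Pi.basisFun K (Fin n)), LinearMap.toMatrix_eq_toMatrix']
  congr 1
  exact LinearMap.toMatrix'_toLin' A

/-- Let `X` and `Y` be `n × n` matrices over an algebraically closed field `k`
of characteristic zero, and set `Z = X*Y - Y*X`. If `Z` commutes with `Y` (`Z*Y = Y*Z`),
then `Z` is nilpotent. -/
theorem commutator_commuting_with_Y_nilpotent (k : Type*) [Field k] [IsAlgClosed k] [CharZero k]
    (n : ℕ) (hn : 1 ≤ n) (X Y : Matrix (Fin n) (Fin n) k)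
    (Z : Matrix (Fin n) (Fin n) k) (hZ : Z = X * Y - Y * X)
    (hcomm : Z * Y = Y * Z) : IsNilpotent Z := by
  classical
  have hZYpow : ∀ s : ℕ, Z ^ s * Y = Y * Z ^ s := fun s ↦
    ((show Commute Z Y from hcomm).pow_left s)
  have htr : ∀ m : ℕ, 1 ≤ m → Matrix.trace (Z ^ m) = 0 := by
    intro m hm
    obtain ⟨s, rfl⟩ : ∃ s, m = s + 1 := ⟨m - 1, (Nat.succ_pred_eq_of_pos hm).symm⟩
    have hyx : Matrix.trace (Y * X * Z ^ s) = Matrix.trace (X * Y * Z ^ s) := by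
      calc Matrix.trace (Y * X * Z ^ s) = Matrix.trace (Y * (X * Z ^ s)) := by
            rw [Matrix.mul_assoc]
        _ = Matrix.trace (X * Z ^ s * Y) := Matrix.trace_mul_comm _ _
        _ = Matrix.trace (X * (Z ^ s * Y)) := by rw [Matrix.mul_assoc]
        _ = Matrix.trace (X * (Y * Z ^ s)) := by rw [hZYpow s]
        _ = Matrix.trace (X * Y * Z ^ s) := by rw [Matrix.mul_assoc]
    rw [pow_succ', hZ, sub_mul, Matrix.trace_sub, ← hZ]
    rw [hZ] at hyx ⊢
    rw [hyx, sub_self]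
  -- transfer to the endomorphism world
  have hf : IsNilpotent (Matrix.toLinAlgEquiv' Z) := by
    apply isNilpotent_of_forall_trace_pow_eq_zero
    intro m hm
    rw [← map_pow, trace_toLinAlgEquiv']
    exact htr m hm
  obtain ⟨N, hN⟩ := hf
  refine ⟨N, ?_⟩
  apply Matrix.toLinAlgEquiv'.injective
  rw [map_pow, map_zero]
  exact hN
end

section
/- Let k be an algebraically closed field of characteristic zero, let X and Y be n×n matrices over k satisfying X*Y − Y*X = Y^2, and let A = Algebra.adjoin k {X, Y} be the unital k-subalgebra of n×n matrices generated by X and Y. Then an element a of A lies in the Jacobson radical of A if and only if a is nilpotent. -/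
open Polynomial Matrix



/-- If `G * F = (F - G) * G` over a char-zero field with `d ≥ 1`, then `G` is singular. -/
lemma jordan_rel_det_singular {k : Type*} [Field k] [CharZero k] {d : ℕ} (hd : 0 < d)
    (F G : Matrix (Fin d) (Fin d) k) (hrel : G * F = (F - G) * G)
    (hG : IsUnit G.det) : False := by
  have hGne : G.det ≠ 0 := hG.ne_zero
  have key : ∀ m : ℕ, G ^ m * F = (F - (m : k) • G) * G ^ m := by
    intro m
    induction m with
    | zero => simp
    | succ m ih =>
      push_cast
      have e1 : G * F = F * G - G * G := by rw [hrel, sub_mul]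
      have h1 : G * (F - (m : k) • G) = (F - ((m : k) + 1) • G) * G := by
        rw [mul_sub, e1, mul_smul_comm, sub_mul, add_smul, one_smul, add_mul, smul_mul_assoc]
        abel
      calc G ^ (m + 1) * F = G * (G ^ m * F) := by rw [pow_succ', mul_assoc]
        _ = G * ((F - (m : k) • G) * G ^ m) := by rw [ih]
        _ = (G * (F - (m : k) • G)) * G ^ m := by rw [mul_assoc]
        _ = (F - ((m : k) + 1) • G) * (G * G ^ m) := by rw [h1, mul_assoc]
        _ = (F - ((m : k) + 1) • G) * G ^ (m + 1) := by rw [← pow_succ']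
  have hdet : ∀ m : ℕ, (F - (m : k) • G).det = F.det := by
    intro m
    have h2 := congrArg Matrix.det (key m)
    rw [det_mul, det_mul, det_pow, mul_comm (G.det ^ m) F.det] at h2
    exact (mul_right_cancel₀ (pow_ne_zero m hGne) h2).symm
  set r : k[X] := ((X : k[X]) • F.map C - G.map C).det with hr
  have heval : ∀ c : k, r.eval c = (c • F - G).det := by
    intro c
    have hmap : ((X : k[X]) • F.map C - G.map C).map (evalRingHom c) = c • F - G := by
      ext i j
      simp only [Matrix.map_apply, Matrix.sub_apply, Matrix.smul_apply, coe_evalRingHom,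
        eval_sub, eval_mul, eval_X, eval_C, smul_eq_mul, mul_comm]
    calc r.eval c = (((X : k[X]) • F.map C - G.map C).map (evalRingHom c)).det :=
          RingHom.map_det (evalRingHom c) _
      _ = (c • F - G).det := by rw [hmap]
  have hroot : ∀ m : ℕ, r.eval (((m : k) + 1)⁻¹) = (((m : k) + 1)⁻¹) ^ d * F.det := by
    intro m
    have hm : ((m : k) + 1) ≠ 0 := Nat.cast_add_one_ne_zero m
    have h3 : (((m : k) + 1)⁻¹) • (F - ((m : k) + 1) • G) = (((m : k) + 1)⁻¹) • F - G := by
      rw [smul_sub, smul_smul, inv_mul_cancel₀ hm, one_smul]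
    have h4 := hdet (m + 1)
    push_cast at h4
    calc r.eval (((m : k) + 1)⁻¹) = ((((m : k) + 1)⁻¹) • F - G).det := heval _
      _ = ((((m : k) + 1)⁻¹) • (F - ((m : k) + 1) • G)).det := by rw [h3]
      _ = (((m : k) + 1)⁻¹) ^ d * (F - ((m : k) + 1) • G).det := by
            rw [det_smul]; simp
      _ = (((m : k) + 1)⁻¹) ^ d * F.det := by rw [h4]
  have hu : r - C F.det * X ^ d = 0 := by
    apply Polynomial.eq_zero_of_infinite_isRoot
    apply Set.infinite_of_injective_forall_mem
      (f := fun m : ℕ => ((m : k) + 1)⁻¹)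
    · intro m₁ m₂ hmm
      have h6 : (m₁ : k) + 1 = (m₂ : k) + 1 := inv_injective hmm
      exact_mod_cast add_right_cancel h6
    · intro m
      simp only [Set.mem_setOf_eq, IsRoot.def, eval_sub, eval_mul, eval_C, eval_pow, eval_X]
      rw [hroot m]; ring
  have h5 : r.eval 0 = F.det * 0 ^ d := by
    have h7 := congrArg (Polynomial.eval 0) hu
    simp only [eval_sub, eval_mul, eval_C, eval_pow, eval_X, eval_zero] at h7
    exact sub_eq_zero.mp h7
  rw [heval 0, zero_smul, zero_sub, det_neg, zero_pow hd.ne', mul_zero] at h5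
  rcases mul_eq_zero.mp h5 with h8 | h8
  · exact pow_ne_zero (Fintype.card (Fin d)) (by norm_num : (-1 : k) ≠ 0) h8
  · exact hGne h8



lemma nilpotent_of_mem_jacobson {k : Type*} [Field k] [IsAlgClosed k] {n : ℕ}
    (A : Subalgebra k (Matrix (Fin n) (Fin n) k)) (a : A)
    (ha : a ∈ Ideal.jacobson (⊥ : Ideal A)) : IsNilpotent a := by
  by_contra hnil
  have hnil' : ¬ IsNilpotent (a : Matrix (Fin n) (Fin n) k) := by
    rintro ⟨e, he⟩
    exact hnil ⟨e, Subtype.ext (by rw [SubmonoidClass.coe_pow]; exact he)⟩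
  have hn0 : n ≠ 0 := by
    rintro rfl
    exact hnil' ⟨1, Subsingleton.elim _ _⟩
  have : Nontrivial k := inferInstance
  set Ma : Matrix (Fin n) (Fin n) k := (a : Matrix (Fin n) (Fin n) k) with hMa
  have hsplit : Splits Ma.charpoly := IsAlgClosed.splits _
  obtain ⟨c, hcmem, hc0⟩ : ∃ c ∈ Ma.charpoly.roots, c ≠ 0 := by
    by_contra hall
    push_neg at hall
    apply hnil'
    have hcard : Ma.charpoly.roots.card = n := by
      rw [(splits_iff_card_roots).mp hsplit, Matrix.charpoly_natDegree_eq_dim, Fintype.card_fin]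
    have hrepl : Ma.charpoly.roots = Multiset.replicate n 0 :=
      Multiset.eq_replicate.mpr ⟨hcard, fun b hb => hall b hb⟩
    have hXn : Ma.charpoly = X ^ n := by
      have hp := hsplit.eq_prod_roots_of_monic (Matrix.charpoly_monic Ma)
      rw [hrepl] at hp
      simpa using hp
    refine ⟨n, ?_⟩
    have h2 := Matrix.aeval_self_charpoly Ma
    rw [hXn] at h2
    simpa using h2
  have hdet0 : (c • (1 : Matrix (Fin n) (Fin n) k) - Ma).det = 0 := by
    have hroot : Ma.charpoly.IsRoot c := isRoot_of_mem_roots hcmem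
    have hmap : (charmatrix Ma).map (evalRingHom c) = c • (1 : Matrix (Fin n) (Fin n) k) - Ma := by
      ext i j
      by_cases hij : i = j
      · subst hij
        simp [charmatrix_apply_eq, Matrix.map_apply]
      · simp [charmatrix_apply_ne _ _ _ hij, Matrix.map_apply, Matrix.one_apply_ne hij]
    have h3 : Ma.charpoly.eval c = ((charmatrix Ma).map (evalRingHom c)).det :=
      RingHom.map_det (evalRingHom c) _
    rw [hmap] at h3
    rw [← h3]
    exact hroot
  obtain ⟨z, hz⟩ := Ideal.mem_jacobson_iff.mp ha (algebraMap k A (-c⁻¹))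
  rw [Ideal.mem_bot, sub_eq_zero] at hz
  have hz' : (z : Matrix (Fin n) (Fin n) k) * ((algebraMap k _ (-c⁻¹)) : Matrix (Fin n) (Fin n) k)
      * Ma + (z : Matrix (Fin n) (Fin n) k) = 1 := by
    have := congrArg (Subtype.val) hz
    push_cast at this
    exact_mod_cast this
  have hz2 : (z : Matrix (Fin n) (Fin n) k) * ((1 : Matrix (Fin n) (Fin n) k) - c⁻¹ • Ma) = 1 := by
    rw [mul_sub, mul_one, mul_smul_comm]
    rw [Algebra.algebraMap_eq_smul_one] at hz'
    rw [mul_smul_comm, smul_mul_assoc, mul_one, neg_smul] at hz'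
    rw [← hz']
    abel
  have hfactor : (1 : Matrix (Fin n) (Fin n) k) - c⁻¹ • Ma
      = c⁻¹ • (c • (1 : Matrix (Fin n) (Fin n) k) - Ma) := by
    rw [smul_sub, smul_smul, inv_mul_cancel₀ hc0, one_smul]
  have := congrArg Matrix.det hz2
  rw [det_mul, hfactor, det_smul, hdet0, mul_zero, mul_zero, det_one] at this
  exact zero_ne_one this

lemma nilpotent_mem_maximal {k : Type*} [Field k] [CharZero k]
    {B : Type*} [Ring B] [Algebra k B] [FiniteDimensional k B]
    (x y : B) (hgen : Algebra.adjoin k ({x, y} : Set B) = ⊤)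
    (hxy : x * y - y * x = y ^ 2)
    (M : Ideal B) (hM : M.IsMaximal) (a : B) (ha : IsNilpotent a) : a ∈ M := by
  haveI : Nontrivial (B ⧸ M) :=
    Submodule.Quotient.nontrivial_iff.mpr hM.ne_top
  haveI : IsSimpleModule B (B ⧸ M) := isSimpleModule_iff_isCoatom.mpr hM.out
  haveI : FiniteDimensional k (B ⧸ M) :=
    Module.Finite.of_surjective ((M.mkQ).restrictScalars k) (Submodule.mkQ_surjective M)
  have hyx : y * x = (x - y) * y := by
    have h2 : x * y - y ^ 2 = y * x := by rw [← hxy]; abel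
    rw [← h2, sub_mul, sq]
  have hmem : ∀ b : B, b ∈ Algebra.adjoin k ({x, y} : Set B) := fun b =>
    hgen.symm ▸ Algebra.mem_top
  -- kernel of the action of y is invariant
  have hWsmul : ∀ b : B, ∀ v : B ⧸ M, y • v = 0 → y • (b • v) = 0 := by
    intro b
    induction hmem b using Algebra.adjoin_induction with
    | mem m hm =>
      rcases hm with rfl | hm
      · intro v hv
        rw [← mul_smul, hyx, mul_smul, hv, smul_zero]
      · simp only [Set.mem_singleton_iff] at hm
        subst hm
        intro v hv
        rw [hv, smul_zero]
    | algebraMap r =>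
      intro v hv
      rw [← mul_smul, ← Algebra.commutes r y, mul_smul, hv, smul_zero]
    | add b c _ _ hb hc =>
      intro v hv
      rw [add_smul, smul_add, hb v hv, hc v hv, add_zero]
    | mul b c _ _ hb hc =>
      intro v hv
      rw [mul_smul]
      exact hb _ (hc v hv)
  let W : Submodule B (B ⧸ M) :=
    { carrier := {v | y • v = 0}
      add_mem' := fun {v w} hv hw => by
        simp only [Set.mem_setOf_eq] at *
        rw [smul_add, hv, hw, add_zero]
      zero_mem' := smul_zero y
      smul_mem' := fun b v hv => hWsmul b v hv }
  let ρ : B →ₐ[k] Module.End k (B ⧸ M) := Algebra.lsmul k k (B ⧸ M)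
  have hy0 : ∀ v : B ⧸ M, y • v = 0 := by
    rcases eq_bot_or_eq_top W with hW | hW
    · exfalso
      have hinj : Function.Injective (ρ y) := by
        intro v w hvw
        have hmem2 : v - w ∈ W := by
          show y • (v - w) = 0
          rw [smul_sub, sub_eq_zero]
          exact hvw
        rw [hW, Submodule.mem_bot] at hmem2
        exact sub_eq_zero.mp hmem2
      have hd : 0 < Module.finrank k (B ⧸ M) := Module.finrank_pos
      let bas := Module.finBasis k (B ⧸ M)
      let φ := LinearMap.toMatrixAlgEquiv bas
      have hrel2 : (ρ y) * (ρ x) = (ρ x - ρ y) * (ρ y) := by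
        apply LinearMap.ext
        intro v
        have lhs : (ρ y * ρ x) v = y • (x • v) := rfl
        have rhs : ((ρ x - ρ y) * ρ y) v = x • (y • v) - y • (y • v) := rfl
        rw [lhs, rhs, ← mul_smul, hyx, mul_smul, sub_smul]
      have hrel3 : φ (ρ y) * φ (ρ x) = (φ (ρ x) - φ (ρ y)) * φ (ρ y) := by
        calc φ (ρ y) * φ (ρ x) = φ (ρ y * ρ x) := (_root_.map_mul φ _ _).symm
          _ = φ ((ρ x - ρ y) * ρ y) := by rw [hrel2]
          _ = φ (ρ x - ρ y) * φ (ρ y) := _root_.map_mul φ _ _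
          _ = (φ (ρ x) - φ (ρ y)) * φ (ρ y) := by rw [map_sub]
      have hunit : IsUnit (ρ y) := by
        rw [Module.End.isUnit_iff]
        exact ⟨hinj, (LinearMap.injective_iff_surjective).mp hinj⟩
      have hGdet : IsUnit (φ (ρ y)).det :=
        (Matrix.isUnit_iff_isUnit_det _).mp (hunit.map φ)
      exact jordan_rel_det_singular hd (φ (ρ x)) (φ (ρ y)) hrel3 hGdet
    · intro v
      have : v ∈ W := hW ▸ Submodule.mem_top
      exact this
  -- the range of ρ lands in the commutative subalgebra generated by ρ x
  have hrange : ∀ b : B, ρ b ∈ Algebra.adjoin k {ρ x} := by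
    intro b
    induction hmem b using Algebra.adjoin_induction with
    | mem m hm =>
      rcases hm with rfl | hm
      · exact Algebra.subset_adjoin rfl
      · simp only [Set.mem_singleton_iff] at hm
        subst hm
        have hz : ρ m = 0 := LinearMap.ext fun v => hy0 v
        rw [hz]
        exact zero_mem _
    | algebraMap r =>
      rw [AlgHom.commutes]
      exact Subalgebra.algebraMap_mem _ r
    | add b c _ _ hb hc => rw [map_add]; exact add_mem hb hc
    | mul b c _ _ hb hc => rw [_root_.map_mul]; exact mul_mem hb hc
  have hcomm : ∀ b c : B, (ρ b) * (ρ c) = (ρ c) * (ρ b) := by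
    intro b c
    have hb := hrange b
    have hc := hrange c
    rw [Algebra.adjoin_singleton_eq_range_aeval] at hb hc
    obtain ⟨p, hp⟩ := hb
    obtain ⟨q, hq⟩ := hc
    rw [← hp, ← hq, ← _root_.map_mul, ← _root_.map_mul, mul_comm]
  let Wa : Submodule B (B ⧸ M) :=
    { carrier := {v | a • v = 0}
      add_mem' := fun {v w} hv hw => by
        simp only [Set.mem_setOf_eq] at *
        rw [smul_add, hv, hw, add_zero]
      zero_mem' := smul_zero a
      smul_mem' := fun b v hv => by
        simp only [Set.mem_setOf_eq] at *
        have hab : a • (b • v) = b • (a • v) := by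
          show (ρ a * ρ b) v = (ρ b * ρ a) v
          rw [hcomm]
        rw [hab, hv, smul_zero] }
  have hWa : Wa = ⊤ := by
    rcases eq_bot_or_eq_top Wa with hWa | hWa
    · exfalso
      obtain ⟨e, he⟩ := ha
      have hinj : Function.Injective (ρ a) := by
        intro v w hvw
        have hmem2 : v - w ∈ Wa := by
          show a • (v - w) = 0
          rw [smul_sub, sub_eq_zero]
          exact hvw
        rw [hWa, Submodule.mem_bot] at hmem2
        exact sub_eq_zero.mp hmem2
      have hpow : (ρ a) ^ e = 0 := by rw [← map_pow, he, map_zero]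
      have hinj' : Function.Injective ((ρ a) ^ e : Module.End k (B ⧸ M)) := by
        rw [Module.End.coe_pow]
        exact Function.Injective.iterate hinj e
      obtain ⟨v, hv⟩ := exists_ne (0 : B ⧸ M)
      apply hv
      apply hinj'
      rw [hpow]
      simp
    · exact hWa
  have hfin : a • (Submodule.Quotient.mk (1 : B) : B ⧸ M) = 0 := by
    have : (Submodule.Quotient.mk (1 : B) : B ⧸ M) ∈ Wa := hWa ▸ Submodule.mem_top
    exact this
  rw [← Submodule.Quotient.mk_smul, smul_eq_mul, mul_one, Submodule.Quotient.mk_eq_zero] at hfin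
  exact hfin


/-- Let `k` be an algebraically closed field of characteristic zero, let `X` and
`Y` be `n × n` matrices over `k` satisfying `X*Y - Y*X = Y^2`, and let
`A = Algebra.adjoin k {X, Y}` be the unital `k`-subalgebra of `n × n` matrices generated by `X`
and `Y`. Then an element `a` of `A` lies in the Jacobson radical of `A` (the intersection of its
maximal left ideals, i.e. `Ideal.jacobson ⊥`) if and only if `a` is nilpotent. -/
theorem jordanian_image_jacobson_radical_eq_nilpotents
    (k : Type*) [Field k] [IsAlgClosed k] [CharZero k]
    (n : ℕ) (hn : 1 ≤ n) (X Y : Matrix (Fin n) (Fin n) k)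
    (h : X * Y - Y * X = Y ^ 2)
    (A : Subalgebra k (Matrix (Fin n) (Fin n) k)) (hA : A = Algebra.adjoin k {X, Y})
    (a : A) : a ∈ Ideal.jacobson (⊥ : Ideal A) ↔ IsNilpotent a := by
  subst hA
  constructor
  · exact fun ha => nilpotent_of_mem_jacobson _ a ha
  · intro ha
    let x' : ↥(Algebra.adjoin k ({X, Y} : Set (Matrix (Fin n) (Fin n) k))) :=
      ⟨X, Algebra.subset_adjoin (by simp)⟩
    let y' : ↥(Algebra.adjoin k ({X, Y} : Set (Matrix (Fin n) (Fin n) k))) :=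
      ⟨Y, Algebra.subset_adjoin (by simp)⟩
    haveI : FiniteDimensional k ↥(Algebra.adjoin k ({X, Y} : Set (Matrix (Fin n) (Fin n) k))) :=
      inferInstance
    have hgen : Algebra.adjoin k ({x', y'} :
        Set ↥(Algebra.adjoin k ({X, Y} : Set (Matrix (Fin n) (Fin n) k)))) = ⊤ := by
      apply eq_top_iff.mpr
      rw [← Algebra.adjoin_adjoin_coe_preimage (R := k)
        (s := ({X, Y} : Set (Matrix (Fin n) (Fin n) k)))]
      apply Algebra.adjoin_mono
      rintro b hb
      rcases hb with hb | hb
      · left; exact Subtype.ext hb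
      · right; exact Subtype.ext hb
    have hxy : x' * y' - y' * x' = y' ^ 2 := Subtype.ext (by push_cast; exact h)
    exact Ideal.mem_sInf.mpr fun {J} hJ => nilpotent_mem_maximal x' y' hgen hxy J hJ.2 a ha
end

section
/- Let k be a field and let R = k⟨x,y⟩/(xy − yx − y²) be the Jordanian algebra. Then the family of monomials indexed by ℕ×ℕ sending (i, j) to y^i * x^j is a basis of R as a k-vector space: it is linearly independent over k and its k-linear span is all of R. -/
/-- The defining relation `x*y = y*x + y*y` of the Jordanian algebra
`R = k⟨x,y⟩/(xy - yx - y²)`, as a relation on the free algebra on two generators. -/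
inductive JordanRel (k : Type) [Field k] :
    FreeAlgebra k (Fin 2) → FreeAlgebra k (Fin 2) → Prop
  | rel : JordanRel k (FreeAlgebra.ι k 0 * FreeAlgebra.ι k 1)
      (FreeAlgebra.ι k 1 * FreeAlgebra.ι k 0 + FreeAlgebra.ι k 1 * FreeAlgebra.ι k 1)

/-- The Jordanian algebra `R = k⟨x,y⟩/(xy - yx - y²)`. -/
abbrev Jordanian (k : Type) [Field k] := RingQuot (JordanRel k)

/-- The image of the generator `x` in the Jordanian algebra. -/
noncomputable def Jordanian.x (k : Type) [Field k] : Jordanian k :=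
  RingQuot.mkAlgHom k (JordanRel k) (FreeAlgebra.ι k 0)

/-- The image of the generator `y` in the Jordanian algebra. -/
noncomputable def Jordanian.y (k : Type) [Field k] : Jordanian k :=
  RingQuot.mkAlgHom k (JordanRel k) (FreeAlgebra.ι k 1)

section Aux

variable (k : Type) [Field k]

/-- The representation space. -/
abbrev JV := (ℕ × ℕ) →₀ k

/-- The operator representing `y`. -/
noncomputable def JY : Module.End k (JV k) :=
  Finsupp.lift (JV k) k (ℕ × ℕ) (fun p => Finsupp.single (p.1 + 1, p.2) 1)

/-- The operator representing `x`. -/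
noncomputable def JX : Module.End k (JV k) :=
  Finsupp.lift (JV k) k (ℕ × ℕ)
    (fun p => Finsupp.single (p.1, p.2 + 1) 1 + (p.1 : k) • Finsupp.single (p.1 + 1, p.2) 1)

lemma JY_single (p : ℕ × ℕ) (c : k) :
    JY k (Finsupp.single p c) = Finsupp.single (p.1 + 1, p.2) c := by
  simp [JY, Finsupp.lift_apply, Finsupp.sum_single_index, Finsupp.smul_single]

lemma JX_single (p : ℕ × ℕ) (c : k) :
    JX k (Finsupp.single p c) =
      Finsupp.single (p.1, p.2 + 1) c + (p.1 : k) • Finsupp.single (p.1 + 1, p.2) c := by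
  simp [JX, Finsupp.lift_apply, Finsupp.sum_single_index, Finsupp.smul_single, smul_add,
    smul_smul, mul_comm]

lemma JXY : JX k * JY k = JY k * JX k + JY k * JY k := by
  apply Finsupp.lhom_ext
  intro p c
  simp only [Module.End.mul_apply, LinearMap.add_apply, JY_single, JX_single, map_add,
    map_smul]
  push_cast
  rw [add_smul, one_smul]
  abel

/-- The free algebra map to endomorphisms. -/
noncomputable def Jψ : FreeAlgebra k (Fin 2) →ₐ[k] Module.End k (JV k) :=
  FreeAlgebra.lift k ![JX k, JY k]

lemma Jψ_rel : ∀ ⦃a b : FreeAlgebra k (Fin 2)⦄, JordanRel k a b → Jψ k a = Jψ k b := by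
  intro a b h
  cases h
  simp only [Jψ, map_mul, map_add, FreeAlgebra.lift_ι_apply]
  simpa using JXY k

/-- The representation of the Jordanian algebra. -/
noncomputable def Jφ : Jordanian k →ₐ[k] Module.End k (JV k) :=
  RingQuot.liftAlgHom k ⟨Jψ k, Jψ_rel k⟩

lemma Jφ_x : Jφ k (Jordanian.x k) = JX k := by
  rw [Jordanian.x, Jφ, RingQuot.liftAlgHom_mkAlgHom_apply]
  simp [Jψ, FreeAlgebra.lift_ι_apply]

lemma Jφ_y : Jφ k (Jordanian.y k) = JY k := by
  rw [Jordanian.y, Jφ, RingQuot.liftAlgHom_mkAlgHom_apply]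
  simp [Jψ, FreeAlgebra.lift_ι_apply]

lemma JX_pow (j : ℕ) : (JX k ^ j) (Finsupp.single ((0 : ℕ), (0 : ℕ)) 1) =
    Finsupp.single ((0 : ℕ), j) 1 := by
  induction j with
  | zero => simp
  | succ n ih =>
    rw [pow_succ', Module.End.mul_apply, ih, JX_single]
    simp

lemma JY_pow (i : ℕ) (p : ℕ × ℕ) : (JY k ^ i) (Finsupp.single p 1) =
    Finsupp.single (p.1 + i, p.2) 1 := by
  induction i with
  | zero => simp
  | succ n ih =>
    rw [pow_succ', Module.End.mul_apply, ih, JY_single, add_assoc]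

lemma Jφ_monomial (p : ℕ × ℕ) :
    Jφ k (Jordanian.y k ^ p.1 * Jordanian.x k ^ p.2) (Finsupp.single ((0:ℕ), (0:ℕ)) 1)
      = Finsupp.single p 1 := by
  rw [map_mul, map_pow, map_pow, Jφ_x, Jφ_y, Module.End.mul_apply, JX_pow, JY_pow]
  simp

/-- The key commutation relation: `x * y^i = y^i * x + i • y^(i+1)`. -/
lemma x_pow_y (i : ℕ) :
    Jordanian.x k * Jordanian.y k ^ i =
      Jordanian.y k ^ i * Jordanian.x k + i • Jordanian.y k ^ (i + 1) := by
  induction i with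
  | zero => simp
  | succ n ih =>
    have hrel : Jordanian.x k * Jordanian.y k =
        Jordanian.y k * Jordanian.x k + Jordanian.y k * Jordanian.y k := by
      rw [Jordanian.x, Jordanian.y, ← map_mul, ← map_mul, ← map_mul, ← map_add]
      exact RingQuot.mkAlgHom_rel k JordanRel.rel
    calc Jordanian.x k * Jordanian.y k ^ (n + 1)
        = (Jordanian.x k * Jordanian.y k ^ n) * Jordanian.y k := by
          rw [pow_succ, mul_assoc]
      _ = (Jordanian.y k ^ n * Jordanian.x k + n • Jordanian.y k ^ (n + 1)) *
            Jordanian.y k := by rw [ih]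
      _ = Jordanian.y k ^ n * (Jordanian.x k * Jordanian.y k) +
            n • Jordanian.y k ^ (n + 2) := by
          rw [add_mul, mul_assoc, smul_mul_assoc, ← pow_succ]
      _ = Jordanian.y k ^ (n + 1) * Jordanian.x k + (n + 1) • Jordanian.y k ^ (n + 2) := by
          rw [hrel, mul_add, ← mul_assoc, ← pow_succ, ← mul_assoc, ← pow_succ, ← pow_succ,
            succ_nsmul]
          abel

end Aux


/-- Let `k` be a field and let `R = k⟨x,y⟩/(xy - yx - y²)` be the Jordanian
algebra. Then the family of monomials indexed by `ℕ × ℕ` sending `(i, j)` to `y^i * x^j` is a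
basis of `R` as a `k`-vector space: it is linearly independent over `k` and its `k`-linear span
is all of `R`. -/
theorem jordanian_monomial_basis (k : Type) [Field k] :
    LinearIndependent k (fun p : ℕ × ℕ => Jordanian.y k ^ p.1 * Jordanian.x k ^ p.2) ∧
    Submodule.span k
      (Set.range fun p : ℕ × ℕ => Jordanian.y k ^ p.1 * Jordanian.x k ^ p.2) = ⊤ := by
  constructor
  · -- linear independence via the representation
    set F : Jordanian k →ₗ[k] JV k :=
      (LinearMap.applyₗ (Finsupp.single ((0:ℕ), (0:ℕ)) (1:k))).comp (Jφ k).toLinearMap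
    apply LinearIndependent.of_comp F
    have : (⇑F ∘ fun p : ℕ × ℕ => Jordanian.y k ^ p.1 * Jordanian.x k ^ p.2) =
        fun p : ℕ × ℕ => Finsupp.single p (1 : k) := by
      funext p
      simpa [F, LinearMap.applyₗ_apply_apply, Module.End.mul_apply] using Jφ_monomial k p
    rw [this]
    have := (Finsupp.basisSingleOne (R := k) (ι := ℕ × ℕ)).linearIndependent
    rwa [Finsupp.coe_basisSingleOne] at this
  · -- spanning
    set S := Submodule.span k
      (Set.range fun p : ℕ × ℕ => Jordanian.y k ^ p.1 * Jordanian.x k ^ p.2) with hS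
    have hmem : ∀ p : ℕ × ℕ, Jordanian.y k ^ p.1 * Jordanian.x k ^ p.2 ∈ S :=
      fun p => Submodule.subset_span (Set.mem_range_self p)
    have hy : ∀ m ∈ S, Jordanian.y k * m ∈ S := by
      intro m hm
      induction hm using Submodule.span_induction with
      | mem v hv =>
        obtain ⟨p, rfl⟩ := hv
        have : Jordanian.y k * (Jordanian.y k ^ p.1 * Jordanian.x k ^ p.2) =
            Jordanian.y k ^ (p.1 + 1) * Jordanian.x k ^ p.2 := by
          rw [← mul_assoc, ← pow_succ']
        rw [this]
        exact hmem (p.1 + 1, p.2)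
      | zero => simp [S.zero_mem]
      | add a b _ _ ha hb => rw [mul_add]; exact S.add_mem ha hb
      | smul c a _ ha => rw [mul_smul_comm]; exact S.smul_mem c ha
    have hx : ∀ m ∈ S, Jordanian.x k * m ∈ S := by
      intro m hm
      induction hm using Submodule.span_induction with
      | mem v hv =>
        obtain ⟨p, rfl⟩ := hv
        have : Jordanian.x k * (Jordanian.y k ^ p.1 * Jordanian.x k ^ p.2) =
            Jordanian.y k ^ p.1 * Jordanian.x k ^ (p.2 + 1) +
              p.1 • (Jordanian.y k ^ (p.1 + 1) * Jordanian.x k ^ p.2) := by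
          rw [← mul_assoc, x_pow_y, add_mul, mul_assoc, ← pow_succ', smul_mul_assoc]
        rw [this]
        exact S.add_mem (hmem (p.1, p.2 + 1))
          (by
            rw [← Nat.cast_smul_eq_nsmul k]
            exact S.smul_mem _ (hmem (p.1 + 1, p.2)))
      | zero => simp [S.zero_mem]
      | add a b _ _ ha hb => rw [mul_add]; exact S.add_mem ha hb
      | smul c a _ ha => rw [mul_smul_comm]; exact S.smul_mem c ha
    have key : ∀ a : FreeAlgebra k (Fin 2), ∀ m ∈ S,
        RingQuot.mkAlgHom k (JordanRel k) a * m ∈ S := by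
      intro a
      induction a using FreeAlgebra.induction with
      | grade0 r =>
        intro m hm
        rw [AlgHom.commutes, Algebra.algebraMap_eq_smul_one, smul_mul_assoc, one_mul]
        exact S.smul_mem r hm
      | grade1 i =>
        intro m hm
        fin_cases i
        · exact hx m hm
        · exact hy m hm
      | mul a b ha hb =>
        intro m hm
        rw [map_mul, mul_assoc]
        exact ha _ (hb m hm)
      | add a b ha hb =>
        intro m hm
        rw [map_add, add_mul]
        exact S.add_mem (ha m hm) (hb m hm)
    rw [eq_top_iff]
    intro r _
    obtain ⟨a, rfl⟩ := RingQuot.mkAlgHom_surjective k (JordanRel k) r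
    have h1 : (1 : Jordanian k) ∈ S := by simpa using hmem (0, 0)
    simpa using key a 1 h1
end

section
/- Let k be an algebraically closed field of characteristic zero and let R = k⟨x,y⟩/(xy − yx − y²). A k-algebra endomorphism φ of R is an automorphism if and only if there exist a nonzero scalar α ∈ k and a polynomial p ∈ k[t] such that φ(x) = α•x + p(y) (the evaluation of p at y in R) and φ(y) = α•y. In particular, every k-algebra automorphism of R is of this form. -/
namespace JordanAux

open Polynomial

variable {k : Type} [Field k]

local notation "Rk" => Jordanian k
local notation "jx" => Jordanian.x k
local notation "jy" => Jordanian.y k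

/-- The defining relation inside the Jordanian algebra. -/
theorem jrel : jx * jy = jy * jx + jy * jy := by
  have := RingQuot.mkAlgHom_rel k (JordanRel.rel (k := k))
  simpa [Jordanian.x, Jordanian.y, map_mul, map_add] using this

/-- Universal property: build an algebra hom out of the Jordanian algebra. -/
noncomputable def mkHom {A : Type} [Ring A] [Algebra k A] (u v : A)
    (h : u * v = v * u + v * v) : Jordanian k →ₐ[k] A :=
  RingQuot.liftAlgHom k ⟨FreeAlgebra.lift k (fun i => if i = 0 then u else v), by
    rintro a b ⟨⟩
    simp [h]⟩

@[simp] theorem mkHom_x {A : Type} [Ring A] [Algebra k A] (u v : A)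
    (h : u * v = v * u + v * v) : mkHom u v h jx = u := by
  simp [mkHom, Jordanian.x, RingQuot.liftAlgHom_mkAlgHom_apply]

@[simp] theorem mkHom_y {A : Type} [Ring A] [Algebra k A] (u v : A)
    (h : u * v = v * u + v * v) : mkHom u v h jy = v := by
  simp [mkHom, Jordanian.y, RingQuot.liftAlgHom_mkAlgHom_apply]

theorem adjoin_xy : Algebra.adjoin k ({jx, jy} : Set Rk) = ⊤ := by
  rw [eq_top_iff]
  intro r _
  obtain ⟨a, rfl⟩ := RingQuot.mkAlgHom_surjective k (JordanRel k) r
  induction a using FreeAlgebra.induction with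
  | grade0 c => simpa using Subalgebra.algebraMap_mem _ c
  | grade1 i =>
      fin_cases i
      · exact Algebra.subset_adjoin (by left; rfl)
      · exact Algebra.subset_adjoin (by right; rfl)
  | mul a b ha hb => rw [map_mul]; exact mul_mem (ha trivial) (hb trivial)
  | add a b ha hb => rw [map_add]; exact add_mem (ha trivial) (hb trivial)

/-- Extensionality on generators. -/
theorem algHom_ext {A : Type} [Semiring A] [Algebra k A] {f g : Jordanian k →ₐ[k] A}
    (hx : f jx = g jx) (hy : f jy = g jy) : f = g := by
  apply AlgHom.ext
  intro r
  have hr : r ∈ Algebra.adjoin k ({jx, jy} : Set Rk) := by rw [adjoin_xy]; trivial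
  induction hr using Algebra.adjoin_induction with
  | mem z hz => rcases hz with rfl | rfl <;> assumption
  | algebraMap c => simp
  | add a b _ _ ha hb => simp [ha, hb]
  | mul a b _ _ ha hb => simp [ha, hb]

/-- The subalgebra-closure induction principle. -/
theorem jordan_induction {p : Rk → Prop} (hx : p jx) (hy : p jy)
    (halg : ∀ c : k, p (algebraMap k Rk c))
    (hadd : ∀ a b, p a → p b → p (a + b))
    (hmul : ∀ a b, p a → p b → p (a * b)) : ∀ r, p r := by
  intro r
  have hr : r ∈ Algebra.adjoin k ({jx, jy} : Set Rk) := by rw [adjoin_xy]; trivial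
  induction hr using Algebra.adjoin_induction with
  | mem z hz => rcases hz with rfl | rfl <;> assumption
  | algebraMap c => exact halg c
  | add a b _ _ ha hb => exact hadd a b ha hb
  | mul a b _ _ ha hb => exact hmul a b ha hb

end JordanAux

namespace JordanAux

variable {k : Type} [Field k]

open Polynomial

local notation "Rk" => Jordanian k
local notation "jx" => Jordanian.x k
local notation "jy" => Jordanian.y k

/-- The "conjugation by y" endomorphism τ : x ↦ x + y, y ↦ y. -/
noncomputable def tau : Jordanian k →ₐ[k] Jordanian k :=
  mkHom (jx + jy) jy (by
    have h := jrel (k := k)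
    rw [add_mul, mul_add, h])

@[simp] theorem tau_x : (tau : Jordanian k →ₐ[k] Jordanian k) jx = jx + jy := mkHom_x _ _ _
@[simp] theorem tau_y : (tau : Jordanian k →ₐ[k] Jordanian k) jy = jy := mkHom_y _ _ _

/-- Commutation: `r * y = y * τ(r)` for all `r`. -/
theorem mul_y_eq (r : Rk) : r * jy = jy * tau r := by
  induction r using jordan_induction with
  | hx => rw [jrel, tau_x, mul_add]
  | hy => simp
  | halg c => simp [Algebra.commutes]
  | hadd a b ha hb => rw [add_mul, ha, hb, map_add, mul_add]
  | hmul a b ha hb => rw [mul_assoc, hb, ← mul_assoc, ha, map_mul, mul_assoc]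

/-- The projection `π : R → k[X]` killing `y`. -/
noncomputable def piX : Jordanian k →ₐ[k] Polynomial k :=
  mkHom X 0 (by ring)

@[simp] theorem piX_x : (piX : Jordanian k →ₐ[k] Polynomial k) jx = X := mkHom_x _ _ _
@[simp] theorem piX_y : (piX : Jordanian k →ₐ[k] Polynomial k) jy = 0 := mkHom_y _ _ _

/-- Decomposition: every element is `q(x) + y*s`. -/
theorem exists_decomp (r : Rk) : ∃ (q : Polynomial k) (s : Rk), r = aeval jx q + jy * s := by
  induction r using jordan_induction with
  | hx => exact ⟨X, 0, by simp⟩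
  | hy => exact ⟨0, 1, by simp⟩
  | halg c => exact ⟨C c, 0, by simp [Polynomial.aeval_C]⟩
  | hadd a b ha hb =>
      obtain ⟨q, s, rfl⟩ := ha; obtain ⟨q', s', rfl⟩ := hb
      exact ⟨q + q', s + s', by rw [map_add]; noncomm_ring⟩
  | hmul a b ha hb =>
      obtain ⟨q, s, rfl⟩ := ha; obtain ⟨q', s', rfl⟩ := hb
      refine ⟨q * q', tau (aeval jx q) * s' + s * (aeval jx q' + jy * s'), ?_⟩
      have h1 : aeval jx q * (jy * s') = jy * (tau (aeval jx q) * s') := by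
        rw [← mul_assoc, mul_y_eq, mul_assoc]
      rw [map_mul]
      calc (aeval jx q + jy * s) * (aeval jx q' + jy * s')
          = aeval jx q * aeval jx q' + (aeval jx q * (jy * s')
              + jy * s * (aeval jx q' + jy * s')) := by noncomm_ring
        _ = aeval jx q * aeval jx q' + jy * (tau (aeval jx q) * s'
              + s * (aeval jx q' + jy * s')) := by rw [h1]; noncomm_ring
        _ = _ := by noncomm_ring

theorem piX_aeval (q : Polynomial k) : piX (aeval jx q) = q := by
  rw [← Polynomial.aeval_algHom_apply, piX_x, Polynomial.aeval_X_left_apply]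

/-- Elements with `π r = 0` lie in `yR`. -/
theorem mem_yR_of_piX_eq_zero {r : Rk} (h : piX r = 0) : ∃ s, r = jy * s := by
  obtain ⟨q, s, rfl⟩ := exists_decomp r
  have : q = 0 := by simpa [piX_aeval] using h
  exact ⟨s, by simp [this]⟩

end JordanAux

namespace JordanAux

variable {k : Type} [Field k]

open Polynomial

local notation "Rk" => Jordanian k
local notation "jx" => Jordanian.x k
local notation "jy" => Jordanian.y k

/-- Multiplication by `X` on `k[X]`. -/
noncomputable def Yop : Module.End k (Polynomial k) := Algebra.lmul k (Polynomial k) X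

/-- The operator `t² d/dt` on `k[X]`. -/
noncomputable def Xop : Module.End k (Polynomial k) :=
  (Algebra.lmul k (Polynomial k) (X ^ 2)) ∘ₗ (Polynomial.derivative : Polynomial k →ₗ[k] Polynomial k)

theorem Yop_apply (f : Polynomial k) : (Yop : Module.End k (Polynomial k)) f = X * f := rfl

theorem Xop_apply (f : Polynomial k) :
    (Xop : Module.End k (Polynomial k)) f = X ^ 2 * derivative f := rfl

theorem XYrel : (Xop : Module.End k (Polynomial k)) * Yop = Yop * Xop + Yop * Yop := by
  apply LinearMap.ext
  intro f
  show Xop (Yop f) = Yop (Xop f) + Yop (Yop f)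
  simp only [Yop_apply, Xop_apply]
  rw [derivative_mul, derivative_X]
  ring

/-- The faithful representation of the Jordanian algebra on `k[X]`. -/
noncomputable def rho : Jordanian k →ₐ[k] Module.End k (Polynomial k) :=
  mkHom Xop Yop XYrel

@[simp] theorem rho_x : (rho : Jordanian k →ₐ[k] _) jx = Xop := mkHom_x _ _ _
@[simp] theorem rho_y : (rho : Jordanian k →ₐ[k] _) jy = Yop := mkHom_y _ _ _

theorem Yop_pow_apply (i : ℕ) (f : Polynomial k) :
    ((Yop : Module.End k (Polynomial k)) ^ i) f = X ^ i * f := by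
  induction i generalizing f with
  | zero => simp
  | succ n ih => rw [pow_succ, Module.End.mul_apply, Yop_apply, ih, pow_succ]; ring

theorem Xop_pow_apply (j n : ℕ) :
    ((Xop : Module.End k (Polynomial k)) ^ j) (X ^ n) =
      (ascPochhammer k j).eval (n : k) • X ^ (n + j) := by
  induction j generalizing n with
  | zero => simp
  | succ j ih =>
      have hX : (Xop : Module.End k (Polynomial k)) (X ^ n) = (n : k) • X ^ (n + 1) := by
        cases n with
        | zero => simp [Xop_apply]
        | succ m =>
            rw [Xop_apply, derivative_X_pow, smul_eq_C_mul]
            push_cast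
            ring
      rw [pow_succ, Module.End.mul_apply, hX, map_smul, ih, ascPochhammer_succ_left,
        eval_mul, eval_comp, eval_X, eval_add, eval_X, eval_one, smul_smul]
      have he : n + 1 + j = n + (j + 1) := by omega
      rw [he]
      congr 1
      push_cast
      ring

theorem rho_monomial (i j n : ℕ) :
    (rho (jy ^ i * jx ^ j) : Module.End k (Polynomial k)) (X ^ n) =
      (ascPochhammer k j).eval (n : k) • X ^ (n + i + j) := by
  rw [map_mul, map_pow rho jy i, map_pow rho jx j, rho_x, rho_y, Module.End.mul_apply, Xop_pow_apply,
    map_smul, Yop_pow_apply]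
  rw [← pow_add]
  have he : i + (n + j) = n + i + j := by omega
  rw [he]

end JordanAux

namespace JordanAux

variable {k : Type} [Field k]

open Polynomial

local notation "Rk" => Jordanian k
local notation "jx" => Jordanian.x k
local notation "jy" => Jordanian.y k

/-- The PBW monomials `y^i x^j`. -/
noncomputable def monom (K : Type) [Field K] (p : ℕ × ℕ) : Jordanian K :=
  Jordanian.y K ^ p.1 * Jordanian.x K ^ p.2

theorem x_mul_ypow (i : ℕ) : jx * jy ^ i = jy ^ i * jx + (i : k) • jy ^ (i + 1) := by
  induction i with
  | zero => simp
  | succ i ih =>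
      have h1 : jx * jy ^ (i+1) = (jx * jy ^ i) * jy := by
        rw [pow_succ, mul_assoc]
      rw [h1, ih, add_mul, smul_mul_assoc, mul_assoc, jrel, mul_add]
      have h2 : jy ^ i * (jy * jx) = jy ^ (i+1) * jx := by rw [← mul_assoc, ← pow_succ]
      have h3 : jy ^ i * (jy * jy) = jy ^ (i+2) := by
        rw [← mul_assoc, ← pow_succ, ← pow_succ]
      have h4 : jy ^ (i+1) * jy = jy ^ (i+2) := by rw [← pow_succ]
      rw [h2, h3, h4]
      have h5 : ((i+1 : ℕ) : k) = (i : k) + 1 := by push_cast; ring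
      rw [h5, add_smul, one_smul]
      abel

theorem mem_span_monom (r : Rk) :
    r ∈ Submodule.span k (Set.range (monom k)) := by
  set M := Submodule.span k (Set.range (monom k)) with hM
  have hmono : ∀ p : ℕ × ℕ, monom k p ∈ M := fun p => Submodule.subset_span ⟨p, rfl⟩
  have hx' : ∀ p : ℕ × ℕ, jx * monom k p ∈ M := by
    rintro ⟨i, j⟩
    have : jx * monom k (i, j) = monom k (i, j+1) + (i : k) • monom k (i+1, j) := by
      show jx * (jy ^ i * jx ^ j) = jy ^ i * jx ^ (j+1) + (i:k) • (jy ^ (i+1) * jx ^ j)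
      rw [← mul_assoc, x_mul_ypow, add_mul, smul_mul_assoc, mul_assoc, ← pow_succ']
    rw [this]
    exact add_mem (hmono _) (Submodule.smul_mem _ _ (hmono _))
  have hy' : ∀ p : ℕ × ℕ, jy * monom k p ∈ M := by
    rintro ⟨i, j⟩
    have : jy * monom k (i, j) = monom k (i+1, j) := by
      show jy * (jy ^ i * jx ^ j) = jy ^ (i+1) * jx ^ j
      rw [← mul_assoc, ← pow_succ']
    rw [this]; exact hmono _
  have key : ∀ r : Rk, ∀ m ∈ M, r * m ∈ M := by
    intro r
    induction r using jordan_induction with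
    | hx =>
        intro m hm
        induction hm using Submodule.span_induction with
        | mem z hz => obtain ⟨p, rfl⟩ := hz; exact hx' p
        | zero => simpa using Submodule.zero_mem M
        | add a b _ _ ha hb => rw [mul_add]; exact add_mem ha hb
        | smul c a _ ha => rw [mul_smul_comm]; exact Submodule.smul_mem _ _ ha
    | hy =>
        intro m hm
        induction hm using Submodule.span_induction with
        | mem z hz => obtain ⟨p, rfl⟩ := hz; exact hy' p
        | zero => simpa using Submodule.zero_mem M
        | add a b _ _ ha hb => rw [mul_add]; exact add_mem ha hb
        | smul c a _ ha => rw [mul_smul_comm]; exact Submodule.smul_mem _ _ ha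
    | halg c =>
        intro m hm
        rw [← Algebra.smul_def]
        exact Submodule.smul_mem _ _ hm
    | hadd a b ha hb =>
        intro m hm
        rw [add_mul]
        exact add_mem (ha m hm) (hb m hm)
    | hmul a b ha hb =>
        intro m hm
        rw [mul_assoc]
        exact ha _ (hb m hm)
  have h1 : (1 : Rk) ∈ M := by
    have : monom k (0, 0) = 1 := by simp [monom]
    rw [← this]; exact hmono _
  simpa using key r 1 h1

/-- Monic polynomials with distinct degrees are linearly independent (coefficients version). -/
theorem monic_indep (f : ℕ → Polynomial k) (hm : ∀ j, (f j).Monic)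
    (hd : ∀ j, (f j).natDegree = j) (s : Finset ℕ) (c : ℕ → k)
    (h : ∑ j ∈ s, c j • f j = 0) : ∀ j ∈ s, c j = 0 := by
  classical
  by_contra hc
  push_neg at hc
  obtain ⟨j0, hj0s, hj0⟩ := hc
  set t := s.filter (fun j => c j ≠ 0) with ht
  have htne : t.Nonempty := ⟨j0, Finset.mem_filter.mpr ⟨hj0s, hj0⟩⟩
  set m := t.max' htne with hm'
  have hmt : m ∈ t := t.max'_mem htne
  have hms : m ∈ s := (Finset.mem_filter.mp hmt).1
  have hcm : c m ≠ 0 := (Finset.mem_filter.mp hmt).2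
  have hcoeff : (∑ j ∈ s, c j • f j).coeff m = c m := by
    rw [finset_sum_coeff]
    rw [Finset.sum_eq_single m]
    · rw [coeff_smul]
      have h1 : (f m).coeff m = 1 := by
        have h2 := Polynomial.Monic.coeff_natDegree (hm m)
        rwa [hd m] at h2
      rw [h1, smul_eq_mul, mul_one]
    · intro j hjs hjm
      rcases lt_or_gt_of_ne hjm with hlt | hgt
      · -- j < m : coeff m of f j is 0
        rw [coeff_smul, Polynomial.coeff_eq_zero_of_natDegree_lt (by rw [hd]; exact hlt),
          smul_zero]
      · -- j > m : c j = 0 by maximality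
        have : c j = 0 := by
          by_contra hcj
          have : j ∈ t := Finset.mem_filter.mpr ⟨hjs, hcj⟩
          exact absurd (t.le_max' j this) (not_le.mpr hgt)
        rw [this, zero_smul, coeff_zero]
    · intro hms'; exact absurd hms hms'
  rw [h, coeff_zero] at hcoeff
  exact hcm hcoeff.symm

theorem eval_nat_zero (g : Polynomial k) [CharZero k] (h : ∀ n : ℕ, g.eval (n : k) = 0) :
    g = 0 :=
  g.eq_zero_of_infinite_isRoot
    (Set.infinite_of_injective_forall_mem (f := fun n : ℕ => (n : k))
      Nat.cast_injective (fun n => h n))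

/-- Core coefficient-extraction lemma. -/
theorem core [CharZero k] (s : Finset (ℕ × ℕ)) (c : ℕ × ℕ → k)
    (h : ∀ n : ℕ, ∑ p ∈ s, c p •
      ((ascPochhammer k p.2).eval (n : k) • (X : Polynomial k) ^ (n + p.1 + p.2)) = 0) :
    ∀ p ∈ s, c p = 0 := by
  intro p0 hp0
  set e := p0.1 + p0.2 with he
  set t := s.filter (fun p : ℕ × ℕ => p.1 + p.2 = e) with htdef
  have hsum : ∀ n : ℕ, ∑ p ∈ t, c p * (ascPochhammer k p.2).eval (n : k) = 0 := by
    intro n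
    have h2 := congrArg (fun g : Polynomial k => g.coeff (n + e)) (h n)
    simp only [finset_sum_coeff, coeff_smul, coeff_X_pow, coeff_zero] at h2
    rw [← h2]
    rw [htdef, Finset.sum_filter]
    apply Finset.sum_congr rfl
    intro p hps
    by_cases hpe : p.1 + p.2 = e
    · rw [if_pos hpe, if_pos (by omega), smul_eq_mul, smul_eq_mul, mul_one]
    · rw [if_neg hpe, if_neg (by omega), smul_zero, smul_zero]
  have hg : (∑ p ∈ t, c p • ascPochhammer k p.2) = 0 := by
    apply eval_nat_zero
    intro n
    rw [eval_finset_sum]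
    simpa [smul_eq_mul] using hsum n
  have hinj : ∀ p ∈ t, ∀ q ∈ t, p.2 = q.2 → p = q := by
    intro p hp q hq hpq
    have hp' := (Finset.mem_filter.mp hp).2
    have hq' := (Finset.mem_filter.mp hq).2
    have : p.1 = q.1 := by omega
    exact Prod.ext this hpq
  have himg : ∑ j ∈ t.image Prod.snd, c (e - j, j) • ascPochhammer k j = 0 := by
    rw [Finset.sum_image hinj]
    rw [← hg]
    apply Finset.sum_congr rfl
    intro p hp
    have hp' := (Finset.mem_filter.mp hp).2
    have h1 : e - p.2 = p.1 := by omega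
    rw [h1]
  have := monic_indep (fun j => ascPochhammer k j) (fun j => monic_ascPochhammer k j)
    (fun j => ascPochhammer_natDegree (S := k) j) (t.image Prod.snd) (fun j => c (e - j, j)) himg
  have hp0t : p0 ∈ t := Finset.mem_filter.mpr ⟨hp0, rfl⟩
  have hp02 : p0.2 ∈ t.image Prod.snd := Finset.mem_image.mpr ⟨p0, hp0t, rfl⟩
  have hfin : c (e - p0.2, p0.2) = 0 := this p0.2 hp02
  have h1 : e - p0.2 = p0.1 := by omega
  rw [h1] at hfin
  simpa using hfin

theorem rho_monom (p : ℕ × ℕ) (n : ℕ) :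
    (rho (monom k p) : Module.End k (Polynomial k)) ((X : Polynomial k) ^ n) =
      (ascPochhammer k p.2).eval (n : k) • X ^ (n + p.1 + p.2) :=
  rho_monomial p.1 p.2 n

theorem monom_indep [CharZero k] : LinearIndependent k (monom k) := by
  rw [linearIndependent_iff']
  intro s c h
  apply core s c
  intro n
  have h2 := congrArg (fun r : Rk => (rho r : Module.End k (Polynomial k)) ((X : Polynomial k) ^ n)) h
  simp only [map_sum, map_smul, map_zero, LinearMap.zero_apply, LinearMap.sum_apply,
    LinearMap.smul_apply] at h2
  rw [← h2]
  apply Finset.sum_congr rfl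
  intro p hp
  rw [rho_monom]

/-- The PBW basis of the Jordanian algebra. -/
noncomputable def bas (k : Type) [Field k] [CharZero k] : Module.Basis (ℕ × ℕ) k (Jordanian k) :=
  Module.Basis.mk (monom_indep (k := k)) (by
    rw [top_le_iff, eq_top_iff]
    intro r _
    exact mem_span_monom r)

@[simp] theorem bas_apply [CharZero k] (p : ℕ × ℕ) : bas k p = monom k p := Module.Basis.mk_apply _ _ _

end JordanAux

namespace JordanAux

variable {k : Type} [Field k]

open Polynomial

local notation "Rk" => Jordanian k
local notation "jx" => Jordanian.x k
local notation "jy" => Jordanian.y k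

theorem y_ne_zero : (jy : Rk) ≠ 0 := by
  intro h
  have h2 := congrArg (rho (k := k)) h
  rw [rho_y, map_zero] at h2
  have h3 := congrArg (fun T : Module.End k (Polynomial k) => T 1) h2
  simp only [Yop_apply, LinearMap.zero_apply, mul_one] at h3
  exact X_ne_zero h3

theorem Rk_nontrivial : Nontrivial Rk := nontrivial_of_ne jy 0 y_ne_zero

theorem exists_good [CharZero k] (g h : Polynomial k) (hg : g ≠ 0) (hh : h ≠ 0) :
    ∃ n : ℕ, g.eval (n : k) ≠ 0 ∧ h.eval (n : k) ≠ 0 := by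
  have hgh : g * h ≠ 0 := mul_ne_zero hg hh
  have hfin : {x : k | (g * h).IsRoot x}.Finite := Polynomial.finite_setOf_isRoot hgh
  have hfin2 : ((fun n : ℕ => (n : k)) ⁻¹' {x : k | (g * h).IsRoot x}).Finite :=
    hfin.preimage (Nat.cast_injective.injOn)
  obtain ⟨n, hn⟩ := hfin2.infinite_compl.nonempty
  simp only [Set.mem_compl_iff, Set.mem_preimage, Set.mem_setOf_eq, IsRoot.def, eval_mul,
    mul_eq_zero, not_or] at hn
  exact ⟨n, hn.1, hn.2⟩

/-- Homogeneous linear combinations of ascPochhammers vanish iff coefficients do. -/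
theorem asc_comb_zero (t : Finset (ℕ × ℕ)) (c : ℕ × ℕ → k) (e : ℕ)
    (hte : ∀ p ∈ t, p.1 + p.2 = e)
    (h : ∑ p ∈ t, c p • ascPochhammer k p.2 = 0) : ∀ p ∈ t, c p = 0 := by
  have hinj : ∀ p ∈ t, ∀ q ∈ t, p.2 = q.2 → p = q := by
    intro p hp q hq hpq
    have hp' := hte p hp
    have hq' := hte q hq
    exact Prod.ext (by omega) hpq
  have himg : ∑ j ∈ t.image Prod.snd, c (e - j, j) • ascPochhammer k j = 0 := by
    rw [Finset.sum_image hinj, ← h]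
    apply Finset.sum_congr rfl
    intro p hp
    have h1 : e - p.2 = p.1 := by have := hte p hp; omega
    rw [h1]
  intro p hp
  have := monic_indep (fun j => ascPochhammer k j) (fun j => monic_ascPochhammer k j)
    (fun j => ascPochhammer_natDegree (S := k) j) (t.image Prod.snd) (fun j => c (e - j, j)) himg
  have hp2 : p.2 ∈ t.image Prod.snd := Finset.mem_image.mpr ⟨p, hp, rfl⟩
  have hfin : c (e - p.2, p.2) = 0 := this p.2 hp2
  have h1 : e - p.2 = p.1 := by have := hte p hp; omega
  rw [h1] at hfin
  simpa using hfin

section Degree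

variable [CharZero k]

/-- The total degree of a nonzero element, via the PBW basis. -/
noncomputable def Dg (r : Rk) : ℕ := (((bas k).repr r).support).sup (fun p => p.1 + p.2)

/-- The "level-d" coefficient polynomial of `r`. -/
noncomputable def Qp (r : Rk) (d : ℕ) : Polynomial k :=
  ∑ p ∈ (((bas k).repr r).support).filter (fun p => p.1 + p.2 = d),
    ((bas k).repr r) p • ascPochhammer k p.2

theorem act (r : Rk) (n : ℕ) :
    (rho r : Module.End k (Polynomial k)) ((X : Polynomial k) ^ n) =
      ∑ p ∈ ((bas k).repr r).support,
        ((bas k).repr r) p • ((ascPochhammer k p.2).eval (n : k) • X ^ (n + p.1 + p.2)) := by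
  conv_lhs => rw [← Module.Basis.linearCombination_repr (bas k) r]
  rw [Finsupp.linearCombination_apply, Finsupp.sum]
  simp only [map_sum, map_smul, LinearMap.sum_apply, LinearMap.smul_apply]
  apply Finset.sum_congr rfl
  intro p hp
  rw [bas_apply, rho_monom]

theorem coeff_act (r : Rk) (n d : ℕ) :
    ((rho r : Module.End k (Polynomial k)) ((X : Polynomial k) ^ n)).coeff (n + d) =
      (Qp r d).eval (n : k) := by
  rw [act, Qp, eval_finset_sum]
  rw [finset_sum_coeff, Finset.sum_filter]
  apply Finset.sum_congr rfl
  intro p hp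
  by_cases hpe : p.1 + p.2 = d
  · rw [if_pos hpe, coeff_smul, coeff_smul, coeff_X_pow, if_pos (by omega), eval_smul]
    simp [smul_eq_mul]
  · rw [if_neg hpe, coeff_smul, coeff_smul, coeff_X_pow, if_neg (by omega)]
    simp

theorem Qp_eq_zero_of_gt (r : Rk) (d : ℕ) (h : Dg r < d) : Qp r d = 0 := by
  rw [Qp]
  apply Finset.sum_eq_zero
  intro p hp
  rw [Finset.mem_filter] at hp
  exfalso
  have : p.1 + p.2 ≤ Dg r := Finset.le_sup (f := fun p : ℕ × ℕ => p.1 + p.2) hp.1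
  omega

theorem Qp_top_ne {r : Rk} (hr : r ≠ 0) : Qp r (Dg r) ≠ 0 := by
  intro h
  have hsupp : (((bas k).repr r).support).Nonempty :=
    Finsupp.support_nonempty_iff.mpr (by
      intro h0
      exact hr (by
        have := congrArg ((bas k).repr.symm) h0
        simpa using this))
  obtain ⟨p0, hp0, hp0'⟩ := Finset.exists_mem_eq_sup _ hsupp (fun p : ℕ × ℕ => p.1 + p.2)
  have hall := asc_comb_zero _ _ (Dg r)
    (fun p hp => (Finset.mem_filter.mp hp).2) h
  have hp0f : p0 ∈ (((bas k).repr r).support).filter (fun p => p.1 + p.2 = Dg r) :=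
    Finset.mem_filter.mpr ⟨hp0, hp0'.symm⟩
  have := hall p0 hp0f
  exact (Finsupp.mem_support_iff.mp hp0) this

theorem mul_ne_zero' {a b : Rk} (ha : a ≠ 0) (hb : b ≠ 0) : a * b ≠ 0 := by
  set Da := Dg a with hDa
  set Db := Dg b with hDb
  have hcompne : (Qp a Da).comp (X + C (Db : k)) ≠ 0 := by
    intro h
    have h2 : Qp a Da = ((Qp a Da).comp (X + C (Db : k))).comp (X - C (Db : k)) := by
      rw [comp_assoc]
      simp
    rw [h, zero_comp] at h2
    exact Qp_top_ne ha h2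
  obtain ⟨n, hg, hh⟩ := exists_good (Qp b Db) ((Qp a Da).comp (X + C (Db : k)))
    (Qp_top_ne hb) hcompne
  have hh' : (Qp a Da).eval ((n + Db : ℕ) : k) ≠ 0 := by
    rw [eval_comp, eval_add, eval_X, eval_C] at hh
    push_cast
    exact hh
  intro hab
  have hco : ((rho (a * b) : Module.End k (Polynomial k)) ((X : Polynomial k) ^ n)).coeff
      (n + (Da + Db)) = (Qp b Db).eval (n : k) * (Qp a Da).eval ((n + Db : ℕ) : k) := by
    rw [map_mul, Module.End.mul_apply, act b n]
    rw [map_sum, finset_sum_coeff]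
    have hstep : ∀ p ∈ ((bas k).repr b).support,
        ((rho a : Module.End k (Polynomial k))
            (((bas k).repr b) p • ((ascPochhammer k p.2).eval (n : k) • X ^ (n + p.1 + p.2)))).coeff
          (n + (Da + Db)) =
        if p.1 + p.2 = Db then
          ((bas k).repr b) p * ((ascPochhammer k p.2).eval (n : k) *
            (Qp a Da).eval ((n + Db : ℕ) : k))
        else 0 := by
      intro p hp
      have hple : p.1 + p.2 ≤ Db := Finset.le_sup (f := fun p : ℕ × ℕ => p.1 + p.2) hp
      rw [map_smul, map_smul, coeff_smul, coeff_smul]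
      by_cases hpe : p.1 + p.2 = Db
      · rw [if_pos hpe]
        have hidx : n + (Da + Db) = (n + p.1 + p.2) + Da := by omega
        rw [hidx, coeff_act]
        have hc2 : ((n + p.1 + p.2 : ℕ) : k) = ((n + Db : ℕ) : k) := by
          rw [show n + p.1 + p.2 = n + Db by omega]
        rw [hc2, smul_eq_mul, smul_eq_mul]
      · rw [if_neg hpe]
        have hidx : n + (Da + Db) = (n + p.1 + p.2) + (Da + Db - (p.1 + p.2)) := by omega
        rw [hidx, coeff_act, Qp_eq_zero_of_gt a _ (by omega)]
        simp
    rw [Finset.sum_congr rfl hstep, ← Finset.sum_filter]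
    have hQb : (Qp b Db).eval (n : k) =
        ∑ p ∈ (((bas k).repr b).support).filter (fun p => p.1 + p.2 = Db),
          ((bas k).repr b) p * (ascPochhammer k p.2).eval (n : k) := by
      rw [Qp, eval_finset_sum]
      apply Finset.sum_congr rfl
      intro p hp
      rw [eval_smul, smul_eq_mul]
    rw [hQb, Finset.sum_mul]
    apply Finset.sum_congr rfl
    intro p hp
    ring
  rw [hab, map_zero] at hco
  simp only [LinearMap.zero_apply, coeff_zero] at hco
  exact absurd hco.symm (mul_ne_zero hg hh')

theorem noZeroDiv : NoZeroDivisors Rk :=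
  ⟨fun {a b} h => by
    by_contra hc
    push_neg at hc
    exact mul_ne_zero' hc.1 hc.2 h⟩

theorem rho_inj : Function.Injective (rho : Jordanian k →ₐ[k] Module.End k (Polynomial k)) := by
  have key : ∀ r : Rk, rho r = 0 → r = 0 := by
    intro r h
    by_contra hr
    have htop := Qp_top_ne hr
    obtain ⟨n, hn, -⟩ := exists_good (Qp r (Dg r)) (Qp r (Dg r)) htop htop
    have := coeff_act r n (Dg r)
    rw [h] at this
    simp only [LinearMap.zero_apply, coeff_zero] at this
    exact hn this.symm
  intro a b hab
  have := key (a - b) (by rw [map_sub, hab, sub_self])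
  exact sub_eq_zero.mp this

/-- An element commuting with `y` is a polynomial in `y`. -/
theorem commute_y_imp {u : Rk} (h : u * jy = jy * u) : ∃ g : Polynomial k, u = aeval jy g := by
  have hcomm : Commute (rho u : Module.End k (Polynomial k)) Yop := by
    have h2 := congrArg (rho : Jordanian k →ₐ[k] Module.End k (Polynomial k)) h
    simp only [map_mul, rho_y] at h2
    exact h2
  set g := (rho u : Module.End k (Polynomial k)) (1 : Polynomial k) with hgdef
  refine ⟨g, rho_inj ?_⟩
  have h1 : ∀ n : ℕ, (rho u : Module.End k (Polynomial k)) ((X : Polynomial k) ^ n) = g * X ^ n := by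
    intro n
    have h2 : ((X : Polynomial k) ^ n) = ((Yop : Module.End k (Polynomial k)) ^ n) 1 := by
      rw [Yop_pow_apply, mul_one]
    have h3 := congrArg (fun T : Module.End k (Polynomial k) => T 1) (hcomm.pow_right n)
    simp only [Module.End.mul_apply] at h3
    rw [h2, h3, Yop_pow_apply, Yop_pow_apply, mul_one]
    ring
  have h4 : rho (aeval jy g) = Algebra.lmul k (Polynomial k) g := by
    have h5 := Polynomial.aeval_algHom_apply
      (rho : Jordanian k →ₐ[k] Module.End k (Polynomial k)) jy g
    rw [rho_y] at h5
    rw [← h5]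
    have h6 := Polynomial.aeval_algHom_apply (Algebra.lmul k (Polynomial k)) X g
    rw [Polynomial.aeval_X_left_apply] at h6
    exact h6
  rw [h4]
  apply (Polynomial.basisMonomials k).ext
  intro n
  have h5 : (Polynomial.basisMonomials k) n = (X : Polynomial k) ^ n := by
    rw [Polynomial.X_pow_eq_monomial]
    rfl
  rw [h5, h1]
  rfl

end Degree

end JordanAux

namespace JordanAux

variable {k : Type} [Field k]

open Polynomial

local notation "Rk" => Jordanian k
local notation "jx" => Jordanian.x k
local notation "jy" => Jordanian.y k

/-- Homogenization map: `x ↦ x·s`, `y ↦ y·s` into `R[s]`. -/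
noncomputable def Hg : Jordanian k →ₐ[k] Polynomial (Jordanian k) :=
  mkHom (monomial 1 jx) (monomial 1 jy) (by
    rw [monomial_mul_monomial, monomial_mul_monomial, monomial_mul_monomial, ← map_add, jrel])

@[simp] theorem Hg_x : (Hg : Jordanian k →ₐ[k] _) jx = monomial 1 jx := mkHom_x _ _ _
@[simp] theorem Hg_y : (Hg : Jordanian k →ₐ[k] _) jy = monomial 1 jy := mkHom_y _ _ _

/-- Evaluation at `1`, a ring hom on `R[s]` (noncommutative base). -/
noncomputable def ev1 : Polynomial (Jordanian k) →+* Jordanian k :=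
  eval₂RingHom' (RingHom.id Rk) 1 (fun a => Commute.one_right a)

theorem ev1_monomial (n : ℕ) (a : Rk) : (ev1 : Polynomial Rk →+* Rk) (monomial n a) = a := by
  show eval₂ (RingHom.id Rk) 1 (monomial n a) = a
  rw [eval₂_monomial]
  simp

theorem ev1_Hg (r : Rk) : (ev1 : Polynomial Rk →+* Rk) (Hg r) = r := by
  induction r using jordan_induction with
  | hx => rw [Hg_x, ev1_monomial]
  | hy => rw [Hg_y, ev1_monomial]
  | halg c =>
      rw [AlgHom.commutes]
      have : (algebraMap k (Polynomial Rk)) c = C (algebraMap k Rk c) := by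
        rw [Polynomial.algebraMap_apply]
      rw [this, ← Polynomial.monomial_zero_left, ev1_monomial]
  | hadd a b ha hb => rw [map_add, map_add, ha, hb]
  | hmul a b ha hb => rw [map_mul, map_mul, ha, hb]

theorem Hg_inj : Function.Injective (Hg : Jordanian k →ₐ[k] Polynomial Rk) := by
  intro a b h
  have := congrArg (ev1 : Polynomial Rk →+* Rk) h
  rwa [ev1_Hg, ev1_Hg] at this

theorem Hg_ne_zero {r : Rk} (h : r ≠ 0) : (Hg : Jordanian k →ₐ[k] _) r ≠ 0 := by
  intro h2
  exact h (Hg_inj (by rw [h2, map_zero]))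

theorem coeff_zero_Hg (r : Rk) : ((Hg : Jordanian k →ₐ[k] _) r).coeff 0 ∈ (⊥ : Subalgebra k Rk) := by
  induction r using jordan_induction with
  | hx => rw [Hg_x, Polynomial.coeff_monomial]; simp
  | hy => rw [Hg_y, Polynomial.coeff_monomial]; simp
  | halg c =>
      rw [AlgHom.commutes]
      have : (algebraMap k (Polynomial Rk)) c = C (algebraMap k Rk c) := by
        rw [Polynomial.algebraMap_apply]
      rw [this, coeff_C]
      simp only [if_pos rfl]
      exact Subalgebra.algebraMap_mem _ c
  | hadd a b ha hb => rw [map_add, Polynomial.coeff_add]; exact add_mem ha hb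
  | hmul a b ha hb => rw [map_mul, Polynomial.mul_coeff_zero]; exact mul_mem ha hb

/-- If the homogenization has degree 0 then the element is a scalar. -/
theorem scalar_of_deg_zero {r : Rk} (h : ((Hg : Jordanian k →ₐ[k] _) r).natDegree = 0) :
    ∃ c : k, r = algebraMap k Rk c := by
  obtain ⟨a, ha⟩ := Polynomial.natDegree_eq_zero.mp h
  have h1 : a = ((Hg : Jordanian k →ₐ[k] _) r).coeff 0 := by rw [← ha, coeff_C]; simp
  have h2 := coeff_zero_Hg (k := k) r
  rw [← h1] at h2
  obtain ⟨c, hc⟩ := Algebra.mem_bot.mp h2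
  refine ⟨c, ?_⟩
  have h3 : r = (ev1 : Polynomial Rk →+* Rk) (Hg r) := (ev1_Hg r).symm
  rw [← ha] at h3
  have h4 : (ev1 : Polynomial Rk →+* Rk) (C a) = a := by
    rw [← Polynomial.monomial_zero_left, ev1_monomial]
  rw [h4] at h3
  rw [h3, ← hc]

theorem Hg_y_natDegree : ((Hg : Jordanian k →ₐ[k] _) jy).natDegree = 1 := by
  classical
  rw [Hg_y, natDegree_monomial]
  rw [if_neg y_ne_zero]

end JordanAux

open JordanAux Polynomial

/-- Let `k` be an algebraically closed field of characteristic zero and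
`R = k⟨x,y⟩/(xy - yx - y²)`. A `k`-algebra endomorphism `φ` of `R` is an automorphism if and
only if there exist a nonzero scalar `α ∈ k` and a polynomial `p ∈ k[t]` such that
`φ(x) = α•x + p(y)` and `φ(y) = α•y`. -/
theorem jordanian_automorphism_characterization (k : Type) [Field k] [IsAlgClosed k] [CharZero k]
    (φ : Jordanian k →ₐ[k] Jordanian k) :
    Function.Bijective φ ↔
      ∃ (α : k) (p : Polynomial k), α ≠ 0 ∧
        φ (Jordanian.x k) = α • Jordanian.x k + Polynomial.aeval (Jordanian.y k) p ∧
        φ (Jordanian.y k) = α • Jordanian.y k := by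
  haveI : Nontrivial (Jordanian k) := Rk_nontrivial
  haveI : NoZeroDivisors (Jordanian k) := noZeroDiv
  set jx := Jordanian.x k with hjx
  set jy := Jordanian.y k with hjy
  constructor
  · intro hφ
    -- the relation satisfied by the images
    have hrel : φ jx * φ jy = φ jy * φ jx + φ jy * φ jy := by
      have h := congrArg φ (jrel (k := k))
      simpa [map_mul, map_add] using h
    -- φ(y) ∈ yR
    have hpiv : piX (φ jy) = 0 := by
      have h2 := congrArg (piX (k := k)) hrel
      simp only [map_mul, map_add] at h2
      have h3 : piX (φ jy) * piX (φ jy) = 0 := by linear_combination -h2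
      exact mul_self_eq_zero.mp h3
    obtain ⟨s₀, hs₀⟩ := mem_yR_of_piX_eq_zero hpiv
    -- the inverse also sends y into yR
    let e := AlgEquiv.ofBijective φ hφ
    have hrel2 : e.symm jx * e.symm jy = e.symm jy * e.symm jx + e.symm jy * e.symm jy := by
      have h := congrArg (⇑e.symm) (jrel (k := k))
      simpa [map_mul, map_add] using h
    have hpiw : piX (e.symm jy) = 0 := by
      have h2 := congrArg (piX (k := k)) hrel2
      simp only [map_mul, map_add] at h2
      have h3 : piX (e.symm jy) * piX (e.symm jy) = 0 := by linear_combination -h2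
      exact mul_self_eq_zero.mp h3
    obtain ⟨w₁, hw₁⟩ := mem_yR_of_piX_eq_zero hpiw
    have hyeq : jy * s₀ * φ (w₁) = jy := by
      have h1 : φ (e.symm jy) = jy := by
        have := e.apply_symm_apply jy
        rwa [AlgEquiv.coe_ofBijective (f := φ) (hf := hφ)] at this
      calc jy * s₀ * φ w₁ = φ jy * φ w₁ := by rw [hs₀]
        _ = φ (jy * w₁) := by rw [map_mul]
        _ = φ (e.symm jy) := by rw [← hw₁]
        _ = jy := h1
    have hyne : (jy : Jordanian k) ≠ 0 := y_ne_zero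
    have hs₀ne : s₀ ≠ 0 := by
      intro h0
      rw [h0, mul_zero, zero_mul] at hyeq
      exact hyne hyeq.symm
    have hwne : φ w₁ ≠ 0 := by
      intro h0
      rw [h0, mul_zero] at hyeq
      exact hyne hyeq.symm
    -- degree count
    have hHg := congrArg (Hg (k := k)) hyeq
    rw [map_mul, map_mul] at hHg
    have hd := congrArg Polynomial.natDegree hHg
    rw [Polynomial.natDegree_mul (mul_ne_zero (Hg_ne_zero hyne) (Hg_ne_zero hs₀ne))
        (Hg_ne_zero hwne),
      Polynomial.natDegree_mul (Hg_ne_zero hyne) (Hg_ne_zero hs₀ne), Hg_y_natDegree] at hd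
    have hdeg0 : (Hg s₀).natDegree = 0 := by omega
    obtain ⟨c, hc⟩ := scalar_of_deg_zero hdeg0
    have hvy : φ jy = c • jy := by
      rw [hs₀, hc, ← Algebra.commutes, ← Algebra.smul_def]
    have hcne : c ≠ 0 := by
      intro h0
      rw [h0, zero_smul] at hvy
      have : φ jy = φ 0 := by rw [hvy, map_zero]
      exact hyne (hφ.injective this)
    -- the x-part
    have hu : φ jx * jy = jy * φ jx + c • (jy * jy) := by
      rw [hvy] at hrel
      rw [mul_smul_comm, smul_mul_assoc, smul_mul_smul_comm] at hrel
      have h5 := congrArg (fun z => c⁻¹ • z) hrel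
      simp only [smul_add, smul_smul, ← mul_assoc, inv_mul_cancel₀ hcne, one_smul, one_mul] at h5
      exact h5
    have hcomm : (φ jx - c • jx) * jy = jy * (φ jx - c • jx) := by
      have hxy := jrel (k := k)
      calc (φ jx - c • jx) * jy = φ jx * jy - c • (jx * jy) := by
            rw [sub_mul, smul_mul_assoc]
        _ = jy * φ jx + c • (jy * jy) - c • (jy * jx + jy * jy) := by rw [hu, hxy]
        _ = jy * φ jx - c • (jy * jx) := by rw [smul_add]; abel
        _ = jy * (φ jx - c • jx) := by rw [mul_sub, mul_smul_comm]
    obtain ⟨g, hg⟩ := commute_y_imp hcomm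
    refine ⟨c, g, hcne, ?_, hvy⟩
    rw [← hg]
    abel
  · rintro ⟨α, p, hα, hx, hy⟩
    set q : Polynomial k := α⁻¹ • (p.comp (Polynomial.C α⁻¹ * Polynomial.X)) with hq
    have haev_comm : ∀ g : Polynomial k, aeval jy g * jy = jy * aeval jy g := by
      intro g
      have h1 : aeval jy g * jy = aeval jy (g * Polynomial.X) := by
        rw [map_mul, Polynomial.aeval_X]
      have h2 : jy * aeval jy g = aeval jy (Polynomial.X * g) := by
        rw [map_mul, Polynomial.aeval_X]
      rw [h1, h2, mul_comm g]
    have hrelψ : (α⁻¹ • jx - aeval jy q) * (α⁻¹ • jy) =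
        (α⁻¹ • jy) * (α⁻¹ • jx - aeval jy q) + (α⁻¹ • jy) * (α⁻¹ • jy) := by
      rw [sub_mul, mul_sub, smul_mul_smul_comm, smul_mul_smul_comm, smul_mul_smul_comm,
        jrel, mul_smul_comm, smul_mul_assoc, haev_comm, smul_add]
      abel
    set ψ : Jordanian k →ₐ[k] Jordanian k := mkHom (α⁻¹ • jx - aeval jy q) (α⁻¹ • jy) hrelψ
      with hψ
    have hψx : ψ jx = α⁻¹ • jx - aeval jy q := mkHom_x _ _ _
    have hψy : ψ jy = α⁻¹ • jy := mkHom_y _ _ _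
    -- key polynomial identities
    have haevC : ∀ (β : k) (r : Jordanian k), aeval r (Polynomial.C β * Polynomial.X) = β • r := by
      intro β r
      rw [map_mul, Polynomial.aeval_X, Polynomial.aeval_C, ← Algebra.smul_def]
    have h1 : aeval (α⁻¹ • jy) p = aeval jy (p.comp (Polynomial.C α⁻¹ * Polynomial.X)) := by
      rw [Polynomial.aeval_comp, haevC]
    have h2 : α • aeval jy q = aeval jy (p.comp (Polynomial.C α⁻¹ * Polynomial.X)) := by
      rw [hq, map_smul, smul_smul, mul_inv_cancel₀ hα, one_smul]
    have h3 : aeval (α • jy) q = α⁻¹ • aeval jy p := by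
      rw [hq, map_smul, Polynomial.aeval_comp, haevC, smul_smul, inv_mul_cancel₀ hα, one_smul]
    have hψφ : ∀ r, ψ (φ r) = r := by
      have : (ψ.comp φ) = AlgHom.id k (Jordanian k) := by
        apply JordanAux.algHom_ext
        · show ψ (φ jx) = jx
          rw [hx, map_add, map_smul, hψx]
          rw [← Polynomial.aeval_algHom_apply, hψy, h1, ← h2]
          rw [smul_sub, smul_smul, mul_inv_cancel₀ hα, one_smul]
          abel
        · show ψ (φ jy) = jy
          rw [hy, map_smul, hψy, smul_smul, mul_inv_cancel₀ hα, one_smul]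
      intro r
      exact AlgHom.congr_fun this r
    have hφψ : ∀ r, φ (ψ r) = r := by
      have : (φ.comp ψ) = AlgHom.id k (Jordanian k) := by
        apply JordanAux.algHom_ext
        · show φ (ψ jx) = jx
          rw [hψx, map_sub, map_smul, hx]
          rw [← Polynomial.aeval_algHom_apply, hy, h3]
          rw [smul_add, smul_smul, inv_mul_cancel₀ hα, one_smul]
          abel
        · show φ (ψ jy) = jy
          rw [hψy, map_smul, hy, smul_smul, inv_mul_cancel₀ hα, one_smul]
      intro r
      exact AlgHom.congr_fun this r
    exact Function.bijective_iff_has_inverse.mpr ⟨ψ, hψφ, hφψ⟩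
end

section
/- Let k be a field and n ≥ 1. A matrix X ∈ M_n(k) satisfies X*J_n − J_n*X = J_n^2 if and only if there exists a polynomial p ∈ k[t] such that X = X⁰ + p(J_n), where p(J_n) denotes the evaluation of p at the matrix J_n. (This describes all n-dimensional representations of the Jordanian algebra in which y acts by a single full Jordan block.) -/
/-- The `n × n` nilpotent Jordan block with ones on the subdiagonal:
`(J_n)_{i,j} = 1` iff `i = j + 1`. -/
def jordanBlock (k : Type*) [Field k] (n : ℕ) : Matrix (Fin n) (Fin n) k :=
  Matrix.of fun i j => if (i : ℕ) = (j : ℕ) + 1 then 1 else 0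

/-- The matrix `X⁰` whose only nonzero entries are `(X⁰)_{j+1,j} = j` for `j = 0,…,n-2`. -/
def Xzero (k : Type*) [Field k] (n : ℕ) : Matrix (Fin n) (Fin n) k :=
  Matrix.of fun i j => if (i : ℕ) = (j : ℕ) + 1 then ((j : ℕ) : k) else 0

section Aux

variable {k : Type*} [Field k] {n : ℕ}

lemma mulJ_apply (A : Matrix (Fin n) (Fin n) k) (i j : Fin n) :
    (A * jordanBlock k n) i j =
      if h : (j : ℕ) + 1 < n then A i ⟨(j : ℕ) + 1, h⟩ else 0 := by
  rw [Matrix.mul_apply]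
  split
  · next h =>
    rw [Finset.sum_eq_single (⟨(j : ℕ) + 1, h⟩ : Fin n)]
    · simp [jordanBlock]
    · intro b _ hb
      have hb' : (b : ℕ) ≠ (j : ℕ) + 1 := fun hh => hb (Fin.ext hh)
      simp [jordanBlock, hb']
    · simp
  · next h =>
    apply Finset.sum_eq_zero
    intro b _
    have hb' : (b : ℕ) ≠ (j : ℕ) + 1 := by omega
    simp [jordanBlock, hb']

lemma Jmul_apply (A : Matrix (Fin n) (Fin n) k) (i j : Fin n) :
    (jordanBlock k n * A) i j =
      if 0 < (i : ℕ) then A ⟨(i : ℕ) - 1, by omega⟩ j else 0 := by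
  rw [Matrix.mul_apply]
  split
  · next h =>
    rw [Finset.sum_eq_single (⟨(i : ℕ) - 1, by omega⟩ : Fin n)]
    · simp only [jordanBlock, Matrix.of_apply, Fin.val_mk]
      rw [if_pos (by omega), one_mul]
    · intro b _ hb
      have hb' : (i : ℕ) ≠ (b : ℕ) + 1 := fun hh =>
        hb (Fin.ext (show (b : ℕ) = (i : ℕ) - 1 by omega))
      simp [jordanBlock, hb']
    · simp
  · next h =>
    apply Finset.sum_eq_zero
    intro b _
    have hb' : (i : ℕ) ≠ (b : ℕ) + 1 := by omega
    simp [jordanBlock, hb']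

lemma jordan_pow_apply (m : ℕ) (i j : Fin n) :
    ((jordanBlock k n) ^ m) i j = if (i : ℕ) = (j : ℕ) + m then 1 else 0 := by
  induction m generalizing i j with
  | zero =>
    simp [Matrix.one_apply, Fin.ext_iff]
  | succ m ih =>
    rw [pow_succ, mulJ_apply]
    split
    · next h =>
      rw [ih]
      simp only [Fin.val_mk]
      rw [show (j : ℕ) + 1 + m = (j : ℕ) + (m + 1) from by omega]
    · next h =>
      rw [if_neg (by omega : (i : ℕ) ≠ (j : ℕ) + (m + 1))]

lemma Xzero_rel (k : Type*) [Field k] (n : ℕ) :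
    Xzero k n * jordanBlock k n - jordanBlock k n * Xzero k n = (jordanBlock k n) ^ 2 := by
  ext i j
  rw [Matrix.sub_apply, mulJ_apply, Jmul_apply, jordan_pow_apply]
  simp only [Xzero, Matrix.of_apply, Fin.val_mk]
  split_ifs <;> (try (exfalso; omega)) <;> (push_cast; ring)

/-- Any matrix commuting with the full nilpotent Jordan block is a lower-triangular
Toeplitz matrix determined by its first column. -/
lemma toeplitz_of_comm (hn : 1 ≤ n) (Y : Matrix (Fin n) (Fin n) k)
    (hY : Y * jordanBlock k n = jordanBlock k n * Y) :
    ∀ (jv : ℕ) (hj : jv < n) (i : Fin n),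
      Y i ⟨jv, hj⟩ =
        if h : jv ≤ (i : ℕ) then Y ⟨(i : ℕ) - jv, by omega⟩ ⟨0, hn⟩ else 0 := by
  intro jv
  induction jv with
  | zero =>
    intro hj i
    rw [dif_pos (Nat.zero_le _)]
    rw [show (⟨(i : ℕ) - 0, by omega⟩ : Fin n) = i from Fin.ext (by simp)]
  | succ jv ih =>
    intro hj i
    have hjv : jv < n := by omega
    have key := congrFun (congrFun hY i) ⟨jv, hjv⟩
    rw [mulJ_apply, Jmul_apply] at key
    simp only [Fin.val_mk] at key
    rw [dif_pos (show (jv : ℕ) + 1 < n from hj)] at key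
    rw [key]
    by_cases hi : 0 < (i : ℕ)
    · rw [if_pos hi, ih hjv]
      by_cases hle : jv + 1 ≤ (i : ℕ)
      · rw [dif_pos (show jv ≤ ((⟨(i : ℕ) - 1, by omega⟩ : Fin n) : ℕ) from by
          simp only [Fin.val_mk]; omega)]
        rw [dif_pos hle]
        congr 1
        exact Fin.ext (by simp only [Fin.val_mk]; omega)
      · rw [dif_neg (show ¬ jv ≤ ((⟨(i : ℕ) - 1, by omega⟩ : Fin n) : ℕ) from by
          simp only [Fin.val_mk]; omega)]
        rw [dif_neg hle]
    · rw [if_neg hi, dif_neg (show ¬ jv + 1 ≤ (i : ℕ) from by omega)]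

lemma comm_is_poly (hn : 1 ≤ n) (Y : Matrix (Fin n) (Fin n) k)
    (hY : Y * jordanBlock k n = jordanBlock k n * Y) :
    ∃ p : Polynomial k, Y = Polynomial.aeval (jordanBlock k n) p := by
  refine ⟨∑ m : Fin n, Polynomial.C (Y m ⟨0, hn⟩) * Polynomial.X ^ (m : ℕ), ?_⟩
  rw [map_sum]
  ext i j
  rw [Matrix.sum_apply]
  have hterm : ∀ m : Fin n,
      (Polynomial.aeval (jordanBlock k n)
          (Polynomial.C (Y m ⟨0, hn⟩) * Polynomial.X ^ (m : ℕ))) i j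
        = Y m ⟨0, hn⟩ * (if (i : ℕ) = (j : ℕ) + (m : ℕ) then 1 else 0) := by
    intro m
    rw [map_mul, Polynomial.aeval_C, map_pow, Polynomial.aeval_X,
      Algebra.algebraMap_eq_smul_one, smul_mul_assoc, one_mul,
      Matrix.smul_apply, smul_eq_mul, jordan_pow_apply]
  rw [Finset.sum_congr rfl (fun m _ => hterm m)]
  have hYij := toeplitz_of_comm hn Y hY (j : ℕ) j.isLt i
  rw [show (⟨(j : ℕ), j.isLt⟩ : Fin n) = j from Fin.ext rfl] at hYij
  rw [hYij]
  by_cases hle : (j : ℕ) ≤ (i : ℕ)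
  · rw [dif_pos hle]
    rw [Finset.sum_eq_single (⟨(i : ℕ) - (j : ℕ), by omega⟩ : Fin n)]
    · simp only [Fin.val_mk]
      rw [if_pos (by omega), mul_one]
    · intro b _ hb
      have hb' : (i : ℕ) ≠ (j : ℕ) + (b : ℕ) := fun hh =>
        hb (Fin.ext (show (b : ℕ) = (i : ℕ) - (j : ℕ) by omega))
      rw [if_neg hb', mul_zero]
    · simp
  · rw [dif_neg hle]
    apply (Finset.sum_eq_zero _).symm
    intro b _
    rw [if_neg (by omega : (i : ℕ) ≠ (j : ℕ) + (b : ℕ)), mul_zero]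

end Aux

/-- Let `k` be a field and `n ≥ 1`. A matrix `X ∈ M_n(k)` satisfies
`X*J_n - J_n*X = J_n^2` if and only if there exists a polynomial `p ∈ k[t]` such that
`X = X⁰ + p(J_n)`.  (This describes all `n`-dimensional representations of the Jordanian
algebra in which `y` acts by a single full Jordan block.) -/
theorem jordanian_full_block_representations (k : Type*) [Field k] (n : ℕ) (hn : 1 ≤ n)
    (X : Matrix (Fin n) (Fin n) k) :
    X * jordanBlock k n - jordanBlock k n * X = (jordanBlock k n) ^ 2 ↔
      ∃ p : Polynomial k, X = Xzero k n + Polynomial.aeval (jordanBlock k n) p := by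
  constructor
  · intro h
    have e : X * jordanBlock k n - jordanBlock k n * X
        = Xzero k n * jordanBlock k n - jordanBlock k n * Xzero k n := by
      rw [h, Xzero_rel]
    have h2 : (X - Xzero k n) * jordanBlock k n = jordanBlock k n * (X - Xzero k n) := by
      rw [sub_mul, Matrix.mul_sub, sub_eq_sub_iff_sub_eq_sub]
      exact e
    obtain ⟨p, hp⟩ := comm_is_poly hn (X - Xzero k n) h2
    exact ⟨p, by rw [← hp, add_sub_cancel]⟩
  · rintro ⟨p, rfl⟩
    have hcomm : Polynomial.aeval (jordanBlock k n) p * jordanBlock k n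
        = jordanBlock k n * Polynomial.aeval (jordanBlock k n) p := by
      have := congrArg (Polynomial.aeval (jordanBlock k n)) (mul_comm p Polynomial.X)
      simpa [map_mul] using this
    rw [add_mul, Matrix.mul_add, hcomm,
      show Xzero k n * jordanBlock k n + jordanBlock k n * Polynomial.aeval (jordanBlock k n) p
        - (jordanBlock k n * Xzero k n + jordanBlock k n * Polynomial.aeval (jordanBlock k n) p)
        = Xzero k n * jordanBlock k n - jordanBlock k n * Xzero k n from by abel]
    exact Xzero_rel k n
end

section
/- Let k be an algebraically closed field of characteristic zero, n ≥ 1, and let X and Y be n×n matrices over k satisfying X*Y − Y*X = Y^2. Suppose the representation is irreducible: the only k-subspaces W of k^n satisfying X·W ⊆ W and Y·W ⊆ W are the zero subspace and k^n itself. Then n = 1 and Y = 0. (Consequently the simple finite-dimensional modules over the Jordanian algebra are exactly the one-dimensional modules S_a, a ∈ k, on which x acts by the scalar a and y acts by 0.) -/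
/-- Let `k` be an algebraically closed field of characteristic zero, `n ≥ 1`,
and let `X`, `Y` be `n × n` matrices over `k` with `X*Y - Y*X = Y^2`. If the representation is
irreducible — the only subspaces `W ⊆ k^n` with `X·W ⊆ W` and `Y·W ⊆ W` are `⊥` and `⊤` —
then `n = 1` and `Y = 0`. -/
theorem jordanian_irreducible_representation (k : Type*) [Field k] [IsAlgClosed k] [CharZero k]
    (n : ℕ) (hn : 1 ≤ n) (X Y : Matrix (Fin n) (Fin n) k)
    (h : X * Y - Y * X = Y ^ 2)
    (hirr : ∀ W : Submodule k (Fin n → k),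
      (∀ v ∈ W, X.mulVec v ∈ W) → (∀ v ∈ W, Y.mulVec v ∈ W) → W = ⊥ ∨ W = ⊤) :
    n = 1 ∧ Y = 0 := by
  -- First show Y = 0.
  have hY0 : Y = 0 := by
    by_contra hY
    -- kernel of Y is invariant
    set L := Y.mulVecLin with hL
    have hker : ∀ v ∈ LinearMap.ker L, Y.mulVec (X.mulVec v) = 0 := by
      intro v hv
      have hv' : Y.mulVec v = 0 := hv
      have : (Y * X).mulVec v = (X * Y).mulVec v - (Y ^ 2).mulVec v := by
        have := congrArg (fun M => Matrix.mulVec M v) h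
        simp only [Matrix.sub_mulVec] at this
        linear_combination (norm := module) -this
      calc Y.mulVec (X.mulVec v) = (Y * X).mulVec v := by
            rw [Matrix.mulVec_mulVec]
        _ = (X * Y).mulVec v - (Y ^ 2).mulVec v := this
        _ = X.mulVec (Y.mulVec v) - Y.mulVec (Y.mulVec v) := by
            rw [← Matrix.mulVec_mulVec, pow_two, ← Matrix.mulVec_mulVec]
        _ = 0 := by rw [hv']; simp
    have hker' : LinearMap.ker L = ⊥ := by
      rcases hirr (LinearMap.ker L)
        (fun v hv => by exact (hker v hv : Y.mulVec (X.mulVec v) = 0))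
        (fun v hv => by
          have hv' : Y.mulVec v = 0 := hv
          show Y.mulVec (Y.mulVec v) = 0
          rw [hv']; simp) with h1 | h1
      · exact h1
      · exfalso
        apply hY
        apply Matrix.ext
        intro i j
        have : Y.mulVec (Pi.single j 1) = 0 := by
          have : Pi.single j (1:k) ∈ LinearMap.ker L := by rw [h1]; trivial
          exact this
        have := congrFun this i
        simpa [Matrix.mulVec_single] using this
    -- Y is invertible
    have hdet : IsUnit Y.det := by
      by_contra hd
      have : Y.det = 0 := by
        simpa [isUnit_iff_ne_zero] using hd
      obtain ⟨v, hv0, hv⟩ := (Matrix.exists_mulVec_eq_zero_iff).mpr this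
      have : v ∈ LinearMap.ker L := hv
      rw [hker'] at this
      exact hv0 this
    -- derive Y⁻¹ * X - X * Y⁻¹ = 1
    have h1 : Y⁻¹ * Y = 1 := Matrix.nonsing_inv_mul Y hdet
    have h2 : Y * Y⁻¹ = 1 := Matrix.mul_nonsing_inv Y hdet
    have key : Y⁻¹ * X - X * Y⁻¹ = 1 := by
      calc Y⁻¹ * X - X * Y⁻¹
          = Y⁻¹ * (X * Y) * Y⁻¹ - Y⁻¹ * (Y * X) * Y⁻¹ := by
            rw [mul_assoc Y⁻¹ (X * Y) Y⁻¹, Matrix.mul_nonsing_inv_cancel_right Y X hdet,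
              Matrix.nonsing_inv_mul_cancel_left Y X hdet]
        _ = Y⁻¹ * (X * Y - Y * X) * Y⁻¹ := by rw [mul_sub, sub_mul]
        _ = Y⁻¹ * Y ^ 2 * Y⁻¹ := by rw [h]
        _ = 1 := by
            rw [pow_two, ← mul_assoc Y⁻¹ Y Y, h1, one_mul, h2]
    have htr := congrArg Matrix.trace key
    rw [Matrix.trace_sub, Matrix.trace_mul_comm, sub_self, Matrix.trace_one] at htr
    have : (n : k) = 0 := by simpa [Fintype.card_fin] using htr.symm
    have : n = 0 := by exact_mod_cast this
    omega
  refine ⟨?_, hY0⟩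
  -- X has an eigenvector; its span is invariant, hence ⊤, hence n = 1.
  haveI : Nontrivial (Fin n → k) := by
    have : 0 < n := hn
    exact ⟨Pi.single ⟨0, this⟩ 1, 0, by
      intro hcontra
      have := congrFun hcontra ⟨0, this⟩
      simp at this⟩
  obtain ⟨μ, hμ⟩ := Module.End.exists_eigenvalue X.mulVecLin
  obtain ⟨v, hv⟩ := hμ.exists_hasEigenvector
  have hv0 : v ≠ 0 := hv.right
  have hXv : X.mulVec v = μ • v := hv.apply_eq_smul
  have hspan := hirr (Submodule.span k {v})
    (fun w hw => by
      rw [Submodule.mem_span_singleton] at hw ⊢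
      obtain ⟨c, rfl⟩ := hw
      exact ⟨c * μ, by rw [Matrix.mulVec_smul, hXv, smul_smul]⟩)
    (fun w hw => by
      rw [hY0]
      simp only [Matrix.zero_mulVec]
      exact Submodule.zero_mem _)
  rcases hspan with h1 | h1
  · exfalso
    have : v ∈ Submodule.span k {v} := Submodule.mem_span_singleton_self v
    rw [h1, Submodule.mem_bot] at this
    exact hv0 this
  · have hfin : Module.finrank k (Fin n → k) = 1 := by
      rw [← finrank_top k (Fin n → k), ← h1, finrank_span_singleton hv0]
    simpa [Module.finrank_fin_fun] using hfin
end

section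
/- Let k be an algebraically closed field of characteristic zero and let X and Y be n×n matrices over k satisfying X*Y − Y*X = Y^2. Then for every λ ∈ k the generalized eigenspace ker((X − λI)^n) ⊆ k^n of X is invariant under Y (and under X), and k^n is the internal direct sum, over the distinct eigenvalues λ of X, of these generalized eigenspaces; in particular every finite-dimensional representation of the Jordanian algebra decomposes as the direct sum of the subrepresentations on the generalized eigenspaces of X. -/
open scoped Classical

open Module LinearMap

namespace JordanianAux

section RingLemmas

variable {A : Type*} [Ring A]

/-- If `a * b = b * a + b ^ 2` then `a * b ^ j = b ^ j * a + j • b ^ (j + 1)`. -/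
lemma comm_pow {a b : A} (h : a * b = b * a + b ^ 2) :
    ∀ j : ℕ, a * b ^ j = b ^ j * a + j • b ^ (j + 1) := by
  intro j
  induction j with
  | zero => simp
  | succ j ih =>
    have h1 : a * b ^ (j + 1) = (a * b ^ j) * b := by rw [pow_succ, ← mul_assoc]
    rw [h1, ih, add_mul, mul_assoc, h, smul_mul_assoc]
    have h2 : b ^ (j + 1) * b = b ^ (j + 2) := by rw [← pow_succ]
    have h3 : b ^ j * (b * a + b ^ 2) = b ^ (j + 1) * a + b ^ (j + 2) := by
      rw [mul_add, ← mul_assoc, ← pow_succ]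
      congr 1
      rw [← pow_add]
    rw [h2, h3, succ_nsmul]
    abel

lemma pow_mul_eq {a b : A} (h : a * b = b * (a + b)) :
    ∀ m : ℕ, a ^ m * b = b * (a + b) ^ m := by
  intro m
  induction m with
  | zero => simp
  | succ m ih =>
    have h1 : a ^ (m + 1) * b = a * (a ^ m * b) := by rw [← mul_assoc, ← pow_succ']
    rw [h1, ih, ← mul_assoc, h, mul_assoc, ← pow_succ']

end RingLemmas

section SpanLemmas

variable (K : Type*) [CommRing K] {A : Type*} [Ring A] [Algebra K A]

lemma pow_mul_right_mem (a b : A) (h : a * b = b * a + b ^ 2) (i : ℕ) :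
    a ^ i * b ∈ Submodule.span K {M : A | ∃ t : ℕ, t ≤ i ∧ M = b ^ (t + 1) * a ^ (i - t)} := by
  induction i with
  | zero =>
    refine Submodule.subset_span ⟨0, le_rfl, ?_⟩
    simp
  | succ i ih =>
    have h1 : a ^ (i + 1) * b = a * (a ^ i * b) := by rw [← mul_assoc, ← pow_succ']
    rw [h1]
    have hmap : (Submodule.span K
          {M : A | ∃ t : ℕ, t ≤ i ∧ M = b ^ (t + 1) * a ^ (i - t)}).map (LinearMap.mulLeft K a) ≤
        Submodule.span K {M : A | ∃ t : ℕ, t ≤ i + 1 ∧ M = b ^ (t + 1) * a ^ (i + 1 - t)} := by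
      rw [Submodule.map_span, Submodule.span_le]
      rintro _ ⟨_, ⟨t, ht, rfl⟩, rfl⟩
      simp only [LinearMap.mulLeft_apply, SetLike.mem_coe]
      have e2 : i + 1 - t = (i - t) + 1 := by omega
      have e3 : i + 1 - (t + 1) = i - t := by omega
      have key : a * (b ^ (t + 1) * a ^ (i - t)) =
          b ^ (t + 1) * a ^ (i + 1 - t) + (t + 1) • (b ^ (t + 2) * a ^ (i + 1 - (t + 1))) := by
        rw [e2, e3, pow_succ' a (i - t), ← mul_assoc, comm_pow h (t + 1), add_mul,
          smul_mul_assoc, mul_assoc]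
      rw [key]
      refine Submodule.add_mem _ (Submodule.subset_span ⟨t, by omega, rfl⟩) ?_
      have hmem : b ^ (t + 2) * a ^ (i + 1 - (t + 1)) ∈ Submodule.span K
          {M : A | ∃ t' : ℕ, t' ≤ i + 1 ∧ M = b ^ (t' + 1) * a ^ (i + 1 - t')} :=
        Submodule.subset_span ⟨t + 1, by omega, rfl⟩
      exact nsmul_mem hmem (t + 1)
    exact hmap ⟨_, ih, rfl⟩

lemma add_pow_mem (a b : A) (h : a * b = b * a + b ^ 2) (m : ℕ) :
    (a + b) ^ m ∈ Submodule.span K {M : A | ∃ i j : ℕ, m ≤ i + 2 * j ∧ M = b ^ j * a ^ i} := by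
  induction m with
  | zero =>
    refine Submodule.subset_span ⟨0, 0, le_rfl, ?_⟩
    simp
  | succ m ih =>
    rw [pow_succ]
    have hmap : (Submodule.span K
          {M : A | ∃ i j : ℕ, m ≤ i + 2 * j ∧ M = b ^ j * a ^ i}).map
            (LinearMap.mulRight K (a + b)) ≤
        Submodule.span K {M : A | ∃ i j : ℕ, m + 1 ≤ i + 2 * j ∧ M = b ^ j * a ^ i} := by
      rw [Submodule.map_span, Submodule.span_le]
      rintro _ ⟨_, ⟨i, j, hij, rfl⟩, rfl⟩
      simp only [LinearMap.mulRight_apply, SetLike.mem_coe]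
      rw [mul_add]
      refine Submodule.add_mem _ ?_ ?_
      · have : b ^ j * a ^ i * a = b ^ j * a ^ (i + 1) := by rw [mul_assoc, ← pow_succ]
        rw [this]
        exact Submodule.subset_span ⟨i + 1, j, by omega, rfl⟩
      · rw [mul_assoc]
        have hmap2 : (Submodule.span K
              {M : A | ∃ t : ℕ, t ≤ i ∧ M = b ^ (t + 1) * a ^ (i - t)}).map
                (LinearMap.mulLeft K (b ^ j)) ≤
            Submodule.span K {M : A | ∃ i' j' : ℕ, m + 1 ≤ i' + 2 * j' ∧ M = b ^ j' * a ^ i'} := by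
          rw [Submodule.map_span, Submodule.span_le]
          rintro _ ⟨_, ⟨t, ht, rfl⟩, rfl⟩
          simp only [LinearMap.mulLeft_apply, SetLike.mem_coe]
          have : b ^ j * (b ^ (t + 1) * a ^ (i - t)) = b ^ (j + t + 1) * a ^ (i - t) := by
            rw [← mul_assoc, ← pow_add, show j + (t + 1) = j + t + 1 from by omega]
          rw [this]
          exact Submodule.subset_span ⟨i - t, j + t + 1, by omega, rfl⟩
        exact hmap2 ⟨_, pow_mul_right_mem K a b h i, rfl⟩
    exact hmap ⟨_, ih, rfl⟩

end SpanLemmas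

section Nilpotent

variable {K : Type*} [Field K] {V : Type*} [AddCommGroup V] [Module K V] [FiniteDimensional K V]

lemma pow_finrank_eq_zero {φ : Module.End K V} (h : IsNilpotent φ) :
    φ ^ (Module.finrank K V) = 0 := by
  have h1 := h.charpoly_eq_X_pow_finrank
  have h2 := φ.aeval_self_charpoly
  rw [h1] at h2
  simpa using h2

lemma isNilpotent_of_comm_sq [IsAlgClosed K] [CharZero K]
    (f g : Module.End K V) (h : f * g - g * f = g ^ 2) : IsNilpotent g := by
  have key : ∀ μ : K, μ ≠ 0 → g.maxGenEigenspace μ = ⊥ := by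
    intro μ hμ
    by_contra hbot
    have hev : g.HasEigenvalue μ := by
      have h0 : g.HasUnifEigenvalue μ ⊤ := hbot
      exact (Module.End.hasUnifEigenvalue_iff_hasUnifEigenvalue_one
        (lt_of_lt_of_le zero_lt_one le_top)).mp h0
    obtain ⟨v, hv⟩ := hev.exists_hasEigenvector
    have hgv : g v = μ • v := hv.apply_eq_smul
    have hv0 : v ≠ 0 := hv.right
    have hgf : g * f = f * g - g ^ 2 := by rw [← h]; abel
    set W : ℕ → Submodule K V := fun j => Submodule.span K ((fun i : ℕ => (f ^ i) v) '' Set.Iio j)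
      with hWdef
    have hWmono : Monotone W := fun i j hij =>
      Submodule.span_mono (Set.image_mono (Set.Iio_subset_Iio hij))
    have hgen : ∀ {i j : ℕ}, i < j → (f ^ i) v ∈ W j := fun {i j} hij =>
      Submodule.subset_span ⟨i, hij, rfl⟩
    have hfW : ∀ j, ∀ x ∈ W j, f x ∈ W (j + 1) := by
      intro j x hx
      have hle : W j ≤ Submodule.comap f (W (j + 1)) := by
        refine Submodule.span_le.mpr ?_
        rintro _ ⟨i, hi, rfl⟩
        simp only [Set.mem_Iio] at hi
        simp only [SetLike.mem_coe, Submodule.mem_comap]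
        have : f ((f ^ i) v) = (f ^ (i + 1)) v := by rw [pow_succ', Module.End.mul_apply]
        rw [this]
        exact hgen (Nat.succ_lt_succ hi)
      exact hle hx
    have hgvW : ∀ j : ℕ, g ((f ^ j) v) - μ • (f ^ j) v ∈ W j := by
      intro j
      induction j using Nat.strong_induction_on with
      | _ j ih =>
        match j with
        | 0 => simp [hgv]
        | (j + 1) =>
          have hgWj : ∀ x ∈ W j, g x ∈ W j := by
            intro x hx
            have hle : W j ≤ Submodule.comap g (W j) := by
              refine Submodule.span_le.mpr ?_
              rintro _ ⟨i, hi, rfl⟩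
              simp only [Set.mem_Iio] at hi
              simp only [SetLike.mem_coe, Submodule.mem_comap]
              have h1 : g ((f ^ i) v) - μ • (f ^ i) v ∈ W j :=
                hWmono hi.le (ih i (hi.trans (Nat.lt_succ_self j)))
              have h2 : μ • (f ^ i) v ∈ W j := Submodule.smul_mem _ _ (hgen hi)
              simpa using Submodule.add_mem _ h1 h2
            exact hle hx
          have hfu : (f ^ (j + 1)) v = f ((f ^ j) v) := by rw [pow_succ', Module.End.mul_apply]
          set u := (f ^ j) v with hu
          set w := g u - μ • u with hwdef
          have hwW : w ∈ W j := ih j (Nat.lt_succ_self j)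
          have hgu : g u = μ • u + w := by rw [hwdef]; abel
          have h1 : g (f u) = f (g u) - g (g u) := by
            have h2 := congrArg (fun T : Module.End K V => T u) hgf
            simpa [Module.End.mul_apply, sq] using h2
          have keyeq : g ((f ^ (j + 1)) v) - μ • ((f ^ (j + 1)) v) =
              f w - (μ * μ) • u - μ • w - g w := by
            rw [hfu, h1, hgu]
            simp only [map_add, map_smul]
            rw [hgu]
            module
          rw [keyeq]
          have m1 : f w ∈ W (j + 1) := hfW j w hwW
          have m2 : u ∈ W (j + 1) := hgen (Nat.lt_succ_self j)
          have m3 : w ∈ W (j + 1) := hWmono (Nat.le_succ j) hwW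
          have m4 : g w ∈ W (j + 1) := hWmono (Nat.le_succ j) (hgWj w hwW)
          exact sub_mem (sub_mem (sub_mem m1 (Submodule.smul_mem _ _ m2))
            (Submodule.smul_mem _ _ m3)) m4
    have hgW : ∀ j, ∀ x ∈ W j, g x ∈ W j := by
      intro j x hx
      have hle : W j ≤ Submodule.comap g (W j) := by
        refine Submodule.span_le.mpr ?_
        rintro _ ⟨i, hi, rfl⟩
        simp only [Set.mem_Iio] at hi
        simp only [SetLike.mem_coe, Submodule.mem_comap]
        have h1 : g ((f ^ i) v) - μ • (f ^ i) v ∈ W j := hWmono hi.le (hgvW i)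
        have h2 : μ • (f ^ i) v ∈ W j := Submodule.smul_mem _ _ (hgen hi)
        simpa using Submodule.add_mem _ h1 h2
      exact hle hx
    set U : Submodule K V := ⨆ j, W j with hUdef
    have hmemU : ∀ x : V, x ∈ U ↔ ∃ j, x ∈ W j := fun x =>
      Submodule.mem_iSup_of_directed W hWmono.directed_le
    have hvU : v ∈ U := (hmemU v).mpr ⟨1, by simpa using hgen (Nat.lt_succ_self 0)⟩
    have hfU : ∀ x ∈ U, f x ∈ U := by
      intro x hx
      obtain ⟨j, hj⟩ := (hmemU x).mp hx
      exact (hmemU _).mpr ⟨j + 1, hfW j x hj⟩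
    have hgU : ∀ x ∈ U, g x ∈ U := by
      intro x hx
      obtain ⟨j, hj⟩ := (hmemU x).mp hx
      exact (hmemU _).mpr ⟨j, hgW j x hj⟩
    have hNW : ∀ j, ∀ x ∈ W j, ((g - μ • (1 : Module.End K V)) ^ j) x = 0 := by
      intro j
      induction j with
      | zero =>
        intro x hx
        have hW0 : W 0 = ⊥ := by
          rw [hWdef]
          have : Set.Iio (0 : ℕ) = (∅ : Set ℕ) := by ext i; simp
          simp [this]
        rw [hW0, Submodule.mem_bot] at hx
        simp [hx]
      | succ j ihj =>
        intro x hx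
        have hNx : (g - μ • (1 : Module.End K V)) x ∈ W j := by
          have hle : W (j + 1) ≤ Submodule.comap (g - μ • (1 : Module.End K V)) (W j) := by
            refine Submodule.span_le.mpr ?_
            rintro _ ⟨i, hi, rfl⟩
            simp only [Set.mem_Iio] at hi
            simp only [SetLike.mem_coe, Submodule.mem_comap, LinearMap.sub_apply,
              LinearMap.smul_apply, Module.End.one_apply]
            exact hWmono (Nat.lt_succ_iff.mp hi) (hgvW i)
          exact hle hx
        have hstep : ((g - μ • (1 : Module.End K V)) ^ (j + 1)) x =
            ((g - μ • (1 : Module.End K V)) ^ j) ((g - μ • (1 : Module.End K V)) x) := by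
          rw [pow_succ, Module.End.mul_apply]
        rw [hstep]
        exact ihj _ hNx
    have hNU : ∀ x ∈ U, (g - μ • (1 : Module.End K V)) x ∈ U := by
      intro x hx
      have : (g - μ • (1 : Module.End K V)) x = g x - μ • x := by simp
      rw [this]
      exact Submodule.sub_mem _ (hgU x hx) (Submodule.smul_mem _ _ hx)
    set fU := f.restrict hfU with hfUdef
    set gU := g.restrict hgU with hgUdef
    set NU := (g - μ • (1 : Module.End K V)).restrict hNU with hNUdef
    have hNUnil : IsNilpotent NU := by
      refine ((LinearMap.charpoly_nilpotent_tfae NU).out 2 0).mp ?_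
      intro m
      obtain ⟨j, hj⟩ := (hmemU (m : V)).mp m.2
      refine ⟨j, ?_⟩
      have hpr : NU ^ j = ((g - μ • (1 : Module.End K V)) ^ j).restrict
          (Module.End.pow_apply_mem_of_forall_mem j hNU) := Module.End.pow_restrict j hNU
      apply Subtype.ext
      rw [hpr, LinearMap.restrict_coe_apply, hNW j _ hj]
      rfl
    have hcommU : fU * gU - gU * fU = gU ^ 2 := by
      ext x
      have hx := congrArg (fun T : Module.End K V => T (x : V)) h
      simp only [LinearMap.sub_apply, Module.End.mul_apply] at hx
      simp only [LinearMap.sub_apply, Module.End.mul_apply, Submodule.coe_sub, sq,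
        hfUdef, hgUdef, LinearMap.restrict_coe_apply]
      simpa [sq, Module.End.mul_apply] using hx
    have htr : LinearMap.trace K U (gU ^ 2) = 0 := by
      rw [← hcommU, map_sub, LinearMap.trace_mul_comm, sub_self]
    have hgUeq : gU = μ • (1 : Module.End K U) + NU := by
      ext x
      simp [hgUdef, hNUdef, LinearMap.restrict_coe_apply]
    have hexp : gU ^ 2 = (μ * μ) • (1 : Module.End K U) + (μ • NU + μ • NU + NU * NU) := by
      rw [hgUeq, sq, add_mul, mul_add, mul_add]
      simp only [smul_mul_assoc, mul_smul_comm, one_mul, mul_one, smul_smul]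
      abel
    have htrN : LinearMap.trace K U NU = 0 := by
      have := LinearMap.isNilpotent_trace_of_isNilpotent hNUnil
      exact this.eq_zero
    have htrN2 : LinearMap.trace K U (NU * NU) = 0 := by
      obtain ⟨c, hc⟩ := hNUnil
      have : IsNilpotent (NU * NU) := by
        refine ⟨c, ?_⟩
        have : (NU * NU) ^ c = NU ^ c * NU ^ c := by
          rw [← sq, ← pow_mul, mul_comm 2 c, pow_mul, sq]
        rw [this, hc, mul_zero]
      exact (LinearMap.isNilpotent_trace_of_isNilpotent this).eq_zero
    have hfin : LinearMap.trace K U (gU ^ 2) = (μ * μ) * (Module.finrank K U : K) := by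
      rw [hexp]
      simp only [map_add, map_smul, htrN, htrN2, LinearMap.trace_one, smul_eq_mul,
        mul_zero, add_zero, zero_add]
    rw [hfin] at htr
    have hnt : Nontrivial U := by
      refine ⟨⟨v, hvU⟩, 0, ?_⟩
      simp [hv0]
    have hfr0 : (Module.finrank K U : K) ≠ 0 :=
      Nat.cast_ne_zero.mpr (Module.finrank_pos).ne'
    exact (mul_ne_zero (mul_ne_zero hμ hμ) hfr0) htr
  have htop : g.maxGenEigenspace 0 = ⊤ := by
    refine le_antisymm le_top ?_
    rw [← Module.End.iSup_maxGenEigenspace_eq_top g]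
    refine iSup_le fun μ => ?_
    rcases eq_or_ne μ 0 with rfl | hμ
    · exact le_rfl
    · rw [key μ hμ]
      exact bot_le
  refine ((LinearMap.charpoly_nilpotent_tfae g).out 2 0).mp ?_
  intro m
  have hm : m ∈ g.maxGenEigenspace 0 := htop ▸ Submodule.mem_top
  rw [Module.End.mem_maxGenEigenspace] at hm
  obtain ⟨j, hj⟩ := hm
  exact ⟨j, by simpa using hj⟩

end Nilpotent

end JordanianAux

/-- Let `k` be an algebraically closed field of characteristic zero and `X`, `Y`
be `n × n` matrices over `k` with `X*Y - Y*X = Y^2`.  For `λ ∈ k` let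
`G λ = ker((X - λI)^n) ⊆ k^n` be the generalized eigenspace of `X` at `λ`.  Then every `G λ` is
invariant under `Y` (and under `X`), and `k^n` is the internal direct sum of the generalized
eigenspaces `G λ` over the distinct eigenvalues `λ` of `X` (the spectrum of `X`); in particular
the representation decomposes as the direct sum of the subrepresentations on the `G λ`. -/
theorem jordanian_generalized_eigenspace_decomposition
    (k : Type*) [Field k] [IsAlgClosed k] [CharZero k]
    (n : ℕ) (hn : 1 ≤ n) (X Y : Matrix (Fin n) (Fin n) k)
    (h : X * Y - Y * X = Y ^ 2)
    (G : k → Submodule k (Fin n → k))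
    (hG : ∀ lam : k, G lam =
      LinearMap.ker (Matrix.mulVecLin ((X - lam • (1 : Matrix (Fin n) (Fin n) k)) ^ n))) :
    (∀ lam : k, (∀ v ∈ G lam, Y.mulVec v ∈ G lam) ∧ (∀ v ∈ G lam, X.mulVec v ∈ G lam)) ∧
    DirectSum.IsInternal (fun lam : spectrum k X => G lam) := by
  set Φ := (Matrix.toLinAlgEquiv' :
    Matrix (Fin n) (Fin n) k ≃ₐ[k] Module.End k (Fin n → k)) with hΦ
  set f := Φ X with hfdef
  set g := Φ Y with hgdef
  have hfr : Module.finrank k (Fin n → k) = n := Module.finrank_fin_fun k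
  have hsm : ∀ lam : k, Φ (X - lam • (1 : Matrix (Fin n) (Fin n) k)) = f - lam • 1 := by
    intro lam
    have h1 : lam • (1 : Matrix (Fin n) (Fin n) k) = algebraMap k _ lam :=
      (Algebra.algebraMap_eq_smul_one lam).symm
    have h2 : lam • (1 : Module.End k (Fin n → k)) = algebraMap k _ lam :=
      (Algebra.algebraMap_eq_smul_one lam).symm
    rw [map_sub, h1, h2, AlgEquiv.commutes]
  have hGker : ∀ lam : k, G lam = LinearMap.ker ((f - lam • 1) ^ n) := by
    intro lam
    rw [hG lam]
    congr 1
    calc Matrix.mulVecLin ((X - lam • (1 : Matrix (Fin n) (Fin n) k)) ^ n)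
        = Φ ((X - lam • (1 : Matrix (Fin n) (Fin n) k)) ^ n) := LinearMap.ext fun v => rfl
      _ = (f - lam • 1) ^ n := by rw [map_pow, hsm]
  have hE : f * g - g * f = g ^ 2 := by
    have h0 := congrArg Φ h
    simpa [map_mul, map_sub, map_pow] using h0
  have hgnil : IsNilpotent g := JordanianAux.isNilpotent_of_comm_sq f g hE
  have hgn : g ^ n = 0 := by
    have h0 := JordanianAux.pow_finrank_eq_zero hgnil
    rwa [hfr] at h0
  have hinv : ∀ lam : k,
      (∀ v ∈ G lam, Y.mulVec v ∈ G lam) ∧ (∀ v ∈ G lam, X.mulVec v ∈ G lam) := by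
    intro lam
    set a := f - lam • (1 : Module.End k (Fin n → k)) with ha
    have hrel : a * g = g * a + g ^ 2 := by
      have h1 : a * g - g * a = f * g - g * f := by
        rw [ha]
        simp only [sub_mul, mul_sub, smul_mul_assoc, mul_smul_comm, one_mul, mul_one]
        abel
      have h2 : a * g - g * a = g ^ 2 := by rw [h1, hE]
      rw [← h2]
      abel
    have hab : a * g = g * (a + g) := by
      rw [hrel, mul_add, sq]
    have hpow : ∀ m : ℕ, a ^ m * g = g * (a + g) ^ m := JordanianAux.pow_mul_eq hab
    constructor
    · intro v hv
      rw [hGker lam, LinearMap.mem_ker] at hv ⊢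
      have hYv : Y.mulVec v = g v := rfl
      rw [hYv]
      have hsum := JordanianAux.add_pow_mem k a g hrel (3 * n)
      have hv3 : ((a + g) ^ (3 * n)) v = 0 := by
        have hle : Submodule.span k
            {M : Module.End k (Fin n → k) | ∃ i j : ℕ, 3 * n ≤ i + 2 * j ∧ M = g ^ j * a ^ i} ≤
            LinearMap.ker (LinearMap.applyₗ v) := by
          refine Submodule.span_le.mpr ?_
          rintro _ ⟨i, j, hij, rfl⟩
          simp only [SetLike.mem_coe, LinearMap.mem_ker]
          show (g ^ j * a ^ i) v = 0
          rw [Module.End.mul_apply]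
          by_cases hjn : n ≤ j
          · have : g ^ j = 0 := by
              have : g ^ j = g ^ n * g ^ (j - n) := by rw [← pow_add]; congr 1; omega
              rw [this, hgn, zero_mul]
            rw [this]
            rfl
          · have hin : n ≤ i := by omega
            have : (a ^ i) v = 0 := by
              have h1 : a ^ i = a ^ (i - n) * a ^ n := by rw [← pow_add]; congr 1; omega
              rw [h1, Module.End.mul_apply, hv, map_zero]
            rw [this, map_zero]
        have := hle hsum
        rw [LinearMap.mem_ker] at this
        simpa using this
      have hvn : ((a + g) ^ n) v = 0 := by
        have h1 : v ∈ LinearMap.ker ((a + g) ^ (3 * n)) := hv3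
        have h2 := Module.End.ker_pow_eq_ker_pow_finrank_of_le
          (f := a + g) (m := 3 * n) (by rw [hfr]; omega)
        rw [h2, hfr] at h1
        exact h1
      have hfin : (a ^ n * g) v = 0 := by
        rw [hpow n, Module.End.mul_apply, hvn, map_zero]
      rw [Module.End.mul_apply] at hfin
      exact hfin
    · intro v hv
      rw [hGker lam, LinearMap.mem_ker] at hv ⊢
      have hXv : X.mulVec v = f v := rfl
      rw [hXv]
      have hcomm : Commute f (f - lam • (1 : Module.End k (Fin n → k))) :=
        (Commute.refl f).sub_right ((Commute.one_right f).smul_right lam)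
      calc ((f - lam • 1) ^ n) (f v)
          = (((f - lam • 1) ^ n) * f) v := rfl
        _ = (f * ((f - lam • 1) ^ n)) v := by
              rw [Commute.eq (Commute.symm (Commute.pow_right hcomm n))]
        _ = f (((f - lam • 1) ^ n) v) := rfl
        _ = 0 := by rw [hv, map_zero]
  refine ⟨hinv, ?_⟩
  have hGmax : ∀ lam : k, G lam = Module.End.maxGenEigenspace f lam := by
    intro lam
    rw [hGker lam, ← Module.End.genEigenspace_nat,
      Module.End.maxGenEigenspace_eq_genEigenspace_finrank, hfr]
  have hspec : spectrum k f = spectrum k X := AlgEquiv.spectrum_eq Φ X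
  have hbot : ∀ lam : k, lam ∉ spectrum k X → G lam = ⊥ := by
    intro lam hlam
    by_contra hne
    apply hlam
    rw [← hspec, ← Module.End.hasEigenvalue_iff_mem_spectrum]
    have h0 : Module.End.HasUnifEigenvalue f lam ⊤ := fun hb => hne ((hGmax lam).trans hb)
    exact (Module.End.hasUnifEigenvalue_iff_hasUnifEigenvalue_one
      (lt_of_lt_of_le zero_lt_one le_top)).mp h0
  apply DirectSum.isInternal_submodule_of_iSupIndep_of_iSup_eq_top
  · have h1 : iSupIndep (Module.End.maxGenEigenspace f) := Module.End.independent_maxGenEigenspace f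
    have h2 : iSupIndep (fun lam : k => G lam) := by
      have : (fun lam : k => G lam) = Module.End.maxGenEigenspace f := funext hGmax
      rw [this]
      exact h1
    exact h2.comp Subtype.val_injective
  · refine le_antisymm le_top ?_
    rw [← Module.End.iSup_maxGenEigenspace_eq_top f]
    refine iSup_le fun lam => ?_
    by_cases hl : lam ∈ spectrum k X
    · exact le_iSup_of_le (⟨lam, hl⟩ : spectrum k X) (le_of_eq (hGmax lam).symm)
    · rw [← hGmax lam, hbot lam hl]
      exact bot_le
end

section
/- Let k be a field of characteristic zero and n ≥ 1, and let A = Algebra.adjoin k {X⁰, J_n} be the unital k-subalgebra of n×n matrices generated by X⁰ and J_n. Then the dimension of A as a k-vector space equals (m+1)² = (n+1)²/4 if n = 2m+1 is odd, and equals m(m+1) = n(n+2)/4 if n = 2m is even. -/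
namespace JFB
variable (k : Type*) [Field k] (n : ℕ)

/-- Weighted subdiagonal matrix: entries `f j` at `(j+s, j)`. -/
def W (f : ℕ → k) (s : ℕ) : Matrix (Fin n) (Fin n) k :=
  Matrix.of fun i j => if (i : ℕ) = (j : ℕ) + s then f j else 0

variable {k n}

lemma W_apply (f : ℕ → k) (s : ℕ) (i j : Fin n) :
    W k n f s i j = if (i : ℕ) = (j : ℕ) + s then f j else 0 := rfl

lemma W_mul (f g : ℕ → k) (s t : ℕ) :
    W k n f s * W k n g t = W k n (fun j => g j * f (j + t)) (s + t) := by
  ext i j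
  rw [Matrix.mul_apply, W_apply]
  rcases Nat.lt_or_ge ((j : ℕ) + t) n with h | h
  · rw [Finset.sum_eq_single (⟨(j : ℕ) + t, h⟩ : Fin n)]
    · simp only [W_apply]
      by_cases hij : (i : ℕ) = (j : ℕ) + (s + t)
      · simp [hij, add_comm, add_assoc, add_left_comm, mul_comm]
      · have h1 : ¬ ((i : ℕ) = (j : ℕ) + t + s) := by omega
        simp [h1, hij]
    · intro b _ hb
      simp only [W_apply]
      have : ¬ ((b : ℕ) = (j : ℕ) + t) := fun hc => hb (Fin.ext hc)
      simp [this]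
    · simp
  · have h0 : ∀ l : Fin n, W k n f s i l * W k n g t l j = 0 := by
      intro l
      simp only [W_apply]
      have : ¬ ((l : ℕ) = (j : ℕ) + t) := by omega
      simp [this]
    rw [Finset.sum_eq_zero fun l _ => h0 l]
    have : ¬ ((i : ℕ) = (j : ℕ) + (s + t)) := by omega
    simp [this]

lemma W_congr {f g : ℕ → k} {s : ℕ} (h : ∀ j, j + s < n → f j = g j) :
    W k n f s = W k n g s := by
  ext i j
  simp only [W_apply]
  split_ifs with hij
  · exact h j (by omega)
  · rfl

lemma W_zero_of_ge {f : ℕ → k} {s : ℕ} (h : n ≤ s) : W k n f s = 0 := by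
  ext i j
  simp only [W_apply, Matrix.zero_apply]
  have : ¬ ((i : ℕ) = (j : ℕ) + s) := by omega
  simp [this]

lemma W_one : W k n (fun _ => 1) 0 = 1 := by
  ext i j
  simp only [W_apply, Matrix.one_apply]
  by_cases h : i = j
  · simp [h]
  · have h2 : ¬ ((i : ℕ) = (j : ℕ)) := fun hc => h (Fin.ext hc)
    have : ¬ ((i : ℕ) = (j : ℕ) + 0) := by omega
    simp [this, h2, h]

lemma W_zero_fun (s : ℕ) : W k n (fun _ => (0 : k)) s = 0 := by
  ext i j; simp [W_apply]

lemma W_add (f g : ℕ → k) (s : ℕ) :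
    W k n (fun j => f j + g j) s = W k n f s + W k n g s := by
  ext i j; simp only [W_apply, Matrix.add_apply]; split_ifs <;> simp

lemma W_smul (a : k) (f : ℕ → k) (s : ℕ) :
    W k n (fun j => a * f j) s = a • W k n f s := by
  ext i j; simp only [W_apply, Matrix.smul_apply, smul_eq_mul]; split_ifs <;> simp

end JFB

namespace JFB
open Polynomial
variable (k : Type*) [Field k] (n : ℕ)

/-- `c e j = j (j+1) ⋯ (j+e-1)`. -/
def c (e j : ℕ) : ℕ := ∏ i ∈ Finset.range e, (j + i)

/-- The polynomial `T (T+1) ⋯ (T+e-1)`. -/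
noncomputable def Cpoly (e : ℕ) : k[X] := ∏ i ∈ Finset.range e, (X + C (i : k))

variable {k n}

lemma c_zero (j : ℕ) : c 0 j = 1 := by simp [c]

lemma c_succ (e j : ℕ) : c (e + 1) j = j * c e (j + 1) := by
  rw [c, Finset.prod_range_succ', add_zero, mul_comm, c]
  congr 1
  exact Finset.prod_congr rfl fun i _ => by omega

lemma Cpoly_monic (e : ℕ) : (Cpoly k e).Monic :=
  monic_prod_of_monic _ _ fun i _ => monic_X_add_C _

lemma Cpoly_natDegree (e : ℕ) : (Cpoly k e).natDegree = e := by
  rw [Cpoly, natDegree_prod]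
  · simp only [natDegree_X_add_C, Finset.sum_const, smul_eq_mul, mul_one, Finset.card_range]
  · intro i _; exact (monic_X_add_C _).ne_zero

lemma Cpoly_eval (e j : ℕ) : (Cpoly k e).eval (j : k) = (c e j : k) := by
  rw [Cpoly, eval_prod, c]
  push_cast
  exact Finset.prod_congr rfl fun i _ => by simp

lemma mem_span_cpoly (m : ℕ) : ∀ d (p : k[X]), p.natDegree ≤ m → p.natDegree ≤ d →
    p ∈ Submodule.span k (Set.range fun e : Fin (m + 1) => Cpoly k e) := by
  intro d
  induction d with
  | zero =>
    intro p hpm hp0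
    obtain ⟨a, rfl⟩ := natDegree_eq_zero.1 (Nat.le_zero.1 hp0)
    have h1 : (Cpoly k 0) = 1 := by simp [Cpoly]
    have : C a = a • Cpoly k 0 := by rw [h1, smul_eq_C_mul, mul_one]
    rw [this]
    exact Submodule.smul_mem _ _ (Submodule.subset_span ⟨⟨0, Nat.succ_pos m⟩, rfl⟩)
  | succ d ih =>
    intro p hpm hpd
    by_cases hd : p.natDegree ≤ d
    · exact ih p hpm hd
    · have hdeg : p.natDegree = d + 1 := by omega
      have hp0 : p ≠ 0 := fun h => by simp [h] at hd
      set q : k[X] := p - p.leadingCoeff • Cpoly k (d + 1) with hq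
      have hlc : (p.leadingCoeff • Cpoly k (d + 1)).leadingCoeff = p.leadingCoeff := by
        rw [smul_eq_C_mul, leadingCoeff_mul, leadingCoeff_C,
          (Cpoly_monic (e := d + 1) (k := k)).leadingCoeff, mul_one]
      have hlcne : p.leadingCoeff ≠ 0 := leadingCoeff_ne_zero.2 hp0
      have hne : p.leadingCoeff • Cpoly k (d + 1) ≠ 0 := by
        intro h
        exact hlcne (by rw [← hlc, h, leadingCoeff_zero])
      have hdq : p.degree = (p.leadingCoeff • Cpoly k (d + 1)).degree := by
        rw [degree_eq_natDegree hp0, degree_eq_natDegree hne, hdeg,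
          smul_eq_C_mul, natDegree_C_mul hlcne, Cpoly_natDegree]
      have hmem : p.leadingCoeff • Cpoly k (d + 1) ∈
          Submodule.span k (Set.range fun e : Fin (m + 1) => Cpoly k e) :=
        Submodule.smul_mem _ _ (Submodule.subset_span ⟨⟨d + 1, by omega⟩, rfl⟩)
      have hsplit : p = q + p.leadingCoeff • Cpoly k (d + 1) := by rw [hq]; ring
      by_cases hq0 : q = 0
      · rw [hsplit, hq0, zero_add]; exact hmem
      · have hqd : q.natDegree ≤ d := by
          have := degree_sub_lt hdq hp0 hlc.symm
          rw [← hq] at this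
          have h2 : q.degree < (d + 1 : ℕ) := by
            rw [degree_eq_natDegree hp0, hdeg] at this
            exact_mod_cast this
          have := (natDegree_lt_iff_degree_lt hq0).2 h2
          omega
        rw [hsplit]
        exact Submodule.add_mem _ (ih q (by omega) hqd) hmem

lemma cpoly_indep : ∀ (m : ℕ) (a : ℕ → k),
    (∑ e ∈ Finset.range (m + 1), a e • Cpoly k e) = 0 → ∀ e ≤ m, a e = 0 := by
  intro m
  induction m with
  | zero =>
    intro a h e he
    interval_cases e
    have h1 : Cpoly k 0 = 1 := by simp [Cpoly]
    rw [Finset.sum_range_one, h1, smul_eq_C_mul, mul_one] at h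
    exact (C_eq_zero).1 h
  | succ m ih =>
    intro a h e he
    have htop : a (m + 1) = 0 := by
      have hc := congrArg (fun p : k[X] => p.coeff (m + 1)) h
      simp only [finset_sum_coeff, coeff_zero] at hc
      rw [Finset.sum_eq_single (m + 1)] at hc
      · have hcN : (Cpoly k (m + 1)).coeff (m + 1) = 1 := by
          have h2 := (Cpoly_monic (k := k) (m + 1)).coeff_natDegree
          rwa [Cpoly_natDegree] at h2
        rwa [coeff_smul, smul_eq_mul, hcN, mul_one] at hc
      · intro b hb hbne
        have hb' : b < m + 2 := Finset.mem_range.1 hb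
        have hlt : (Cpoly k b).natDegree < m + 1 := by rw [Cpoly_natDegree]; omega
        rw [coeff_smul, smul_eq_mul, coeff_eq_zero_of_natDegree_lt hlt, mul_zero]
      · intro hmem
        exact absurd (Finset.self_mem_range_succ (m + 1)) hmem
    rw [Finset.sum_range_succ, htop, zero_smul, add_zero] at h
    rcases Nat.lt_or_ge e (m + 1) with h1 | h1
    · exact ih a h e (by omega)
    · have : e = m + 1 := by omega
      rw [this]; exact htop

end JFB

namespace JFB
open Polynomial

variable (k : Type*) [Field k] (n : ℕ)

/-- Index type for the basis. -/
abbrev Idx (n : ℕ) := Σ s : Fin n, Fin (min (s : ℕ) (n - 1 - (s : ℕ)) + 1)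

/-- Basis family. -/
noncomputable def B : Idx n → Matrix (Fin n) (Fin n) k :=
  fun p => W k n (fun j => (c (p.2 : ℕ) j : k)) (p.1 : ℕ)

noncomputable def S : Submodule k (Matrix (Fin n) (Fin n) k) :=
  Submodule.span k (Set.range (B k n))

variable {k n}
variable [CharZero k]

lemma W_eval_mem_of_le_min {s : ℕ} (hs : s < n) (p : k[X])
    (hp : p.natDegree ≤ min s (n - 1 - s)) :
    W k n (fun j => p.eval (j : k)) s ∈ S k n := by
  set m := min s (n - 1 - s) with hm
  have hmem := mem_span_cpoly m p.natDegree p hp le_rfl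
  clear hp
  induction hmem using Submodule.span_induction with
  | mem x hx =>
    obtain ⟨e, rfl⟩ := hx
    have hfe : (fun j : ℕ => (Cpoly k (e : ℕ)).eval (j : k)) =
        (fun j : ℕ => (c (e : ℕ) j : k)) := funext fun j => Cpoly_eval _ _
    rw [hfe]
    exact Submodule.subset_span ⟨⟨⟨s, hs⟩, ⟨(e : ℕ), by simpa [hm] using e.2⟩⟩, rfl⟩
  | zero =>
    have : (fun j : ℕ => (0 : k[X]).eval (j : k)) = fun _ => (0 : k) := by
      funext j; simp
    rw [this, W_zero_fun]
    exact Submodule.zero_mem _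
  | add x y hx hy ihx ihy =>
    have : (fun j : ℕ => (x + y).eval (j : k)) =
        fun j : ℕ => x.eval (j : k) + y.eval (j : k) := by funext j; simp
    rw [this, W_add]
    exact Submodule.add_mem _ ihx ihy
  | smul a x hx ihx =>
    have : (fun j : ℕ => (a • x).eval (j : k)) =
        fun j : ℕ => a * x.eval (j : k) := by funext j; simp
    rw [this, W_smul]
    exact Submodule.smul_mem _ _ ihx

/-- The workhorse: any weighted shift whose weight is polynomial of degree `≤ s`
lies in the span. -/
lemma W_eval_mem {s : ℕ} (p : k[X]) (hp : p.natDegree ≤ s) :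
    W k n (fun j => p.eval (j : k)) s ∈ S k n := by
  rcases Nat.lt_or_ge s n with hs | hs
  · by_cases hd : p.natDegree ≤ n - 1 - s
    · exact W_eval_mem_of_le_min hs p (by omega)
    · -- interpolate on the nodes 0, 1, …, n-s-1
      set q : k[X] := Lagrange.interpolate (Finset.range (n - s))
        (fun j : ℕ => (j : k)) (fun j : ℕ => p.eval (j : k)) with hq
      have hinj : Set.InjOn (fun j : ℕ => (j : k)) (Finset.range (n - s)) :=
        fun a _ b _ hab => Nat.cast_injective hab
      have hqdeg : q.degree < (n - s : ℕ) := by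
        have := Lagrange.degree_interpolate_lt (s := Finset.range (n - s))
          (v := fun j : ℕ => (j : k)) (r := fun j : ℕ => p.eval (j : k)) hinj
        simpa only [Finset.card_range] using this
      have hqnat : q.natDegree ≤ min s (n - 1 - s) := by
        by_cases hq0 : q = 0
        · simp [hq0]
        · have := (natDegree_lt_iff_degree_lt hq0).2 hqdeg
          omega
      have heq : W k n (fun j => p.eval (j : k)) s =
          W k n (fun j => q.eval (j : k)) s := by
        apply W_congr
        intro j hj
        rw [hq, Lagrange.eval_interpolate_at_node _ hinj
          (Finset.mem_range.2 (by omega))]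
      rw [heq]
      exact W_eval_mem_of_le_min hs q hqnat
  · rw [W_zero_of_ge hs]
    exact Submodule.zero_mem _

lemma one_mem_S (hn : 1 ≤ n) : (1 : Matrix (Fin n) (Fin n) k) ∈ S k n := by
  have h1 : (1 : Matrix (Fin n) (Fin n) k) =
      W k n (fun j => ((1 : k[X])).eval (j : k)) 0 := by
    rw [← W_one]
    congr 1
    funext j; simp
  rw [h1]
  exact W_eval_mem (1 : k[X]) (by simp)

lemma mul_mem_S {x y : Matrix (Fin n) (Fin n) k}
    (hx : x ∈ S k n) (hy : y ∈ S k n) : x * y ∈ S k n := by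
  induction hx, hy using Submodule.span_induction₂ with
  | mem_mem x y hx hy =>
    obtain ⟨⟨s, e⟩, rfl⟩ := hx
    obtain ⟨⟨t, f⟩, rfl⟩ := hy
    rw [B, B, W_mul]
    set Q : k[X] := Cpoly k (f : ℕ) * (Cpoly k (e : ℕ)).comp (X + C ((t : ℕ) : k))
      with hQ
    have hQdeg : Q.natDegree ≤ (s : ℕ) + (t : ℕ) := by
      refine le_trans (natDegree_mul_le) ?_
      rw [natDegree_comp, Cpoly_natDegree, Cpoly_natDegree, natDegree_X_add_C,
        mul_one]
      have he : (e : ℕ) ≤ min (s : ℕ) (n - 1 - (s : ℕ)) := by omega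
      have hf : (f : ℕ) ≤ min (t : ℕ) (n - 1 - (t : ℕ)) := by omega
      omega
    have hQeval : (fun j : ℕ => (c (f : ℕ) j : k) * (c (e : ℕ) (j + (t : ℕ)) : k)) =
        fun j : ℕ => Q.eval (j : k) := by
      funext j
      rw [hQ, eval_mul, eval_comp, eval_add, eval_X, eval_C, Cpoly_eval]
      congr 1
      rw [← Cpoly_eval]
      congr 1
      push_cast
      ring
    rw [hQeval]
    exact W_eval_mem Q hQdeg
  | zero_left y hy => simp [Submodule.zero_mem]
  | zero_right x hx => simp [Submodule.zero_mem]
  | add_left x y z hx hy hz ihx ihy =>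
    rw [add_mul]; exact Submodule.add_mem _ ihx ihy
  | add_right x y z hx hy hz ihx ihy =>
    rw [mul_add]; exact Submodule.add_mem _ ihx ihy
  | smul_left a x y hx hy ih =>
    rw [smul_mul_assoc]; exact Submodule.smul_mem _ _ ih
  | smul_right a x y hx hy ih =>
    rw [mul_smul_comm]; exact Submodule.smul_mem _ _ ih

end JFB

namespace JFB
open Polynomial

variable {k : Type*} [Field k] {n : ℕ}

lemma J_pow (s : ℕ) : (jordanBlock k n) ^ s = W k n (fun _ => 1) s := by
  induction s with
  | zero => rw [pow_zero, W_one]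
  | succ s ih =>
    have hJ : jordanBlock k n = W k n (fun _ => (1 : k)) 1 := rfl
    rw [pow_succ, ih, hJ, W_mul]
    exact W_congr fun j _ => one_mul 1

lemma X_pow (e : ℕ) : (Xzero k n) ^ e = W k n (fun j => (c e j : k)) e := by
  induction e with
  | zero =>
    rw [pow_zero, ← W_one]
    exact W_congr fun j _ => by rw [c_zero]; norm_num
  | succ e ih =>
    have hX : Xzero k n = W k n (fun j => ((j : ℕ) : k)) 1 := rfl
    rw [pow_succ, ih, hX, W_mul]
    exact W_congr fun j _ => by rw [c_succ]; push_cast; ring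

variable [CharZero k]

lemma B_indep : LinearIndependent k (B k n) := by
  rw [Fintype.linearIndependent_iff]
  intro g hg i₀
  obtain ⟨s₀, e₀⟩ := i₀
  have hm₀ : (e₀ : ℕ) < min (s₀ : ℕ) (n - 1 - (s₀ : ℕ)) + 1 := e₀.2
  set a : ℕ → k :=
    fun e => if h : e < min (s₀ : ℕ) (n - 1 - (s₀ : ℕ)) + 1 then g ⟨s₀, ⟨e, h⟩⟩ else 0
    with ha
  have key : ∀ j : ℕ, j + (s₀ : ℕ) < n →
      ∑ e ∈ Finset.range (min (s₀ : ℕ) (n - 1 - (s₀ : ℕ)) + 1), a e * (c e j : k) = 0 := by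
    intro j hjn
    have h1 := congrArg (fun M : Matrix (Fin n) (Fin n) k =>
      M ⟨j + (s₀ : ℕ), hjn⟩ ⟨j, by omega⟩) hg
    simp only [Matrix.sum_apply, Matrix.smul_apply, smul_eq_mul,
      Matrix.zero_apply] at h1
    rw [← Finset.univ_sigma_univ, Finset.sum_sigma] at h1
    rw [Finset.sum_eq_single s₀] at h1
    · have hBe : ∀ e : Fin (min (s₀ : ℕ) (n - 1 - (s₀ : ℕ)) + 1),
          B k n ⟨s₀, e⟩ ⟨j + (s₀ : ℕ), hjn⟩ ⟨j, by omega⟩ = (c (e : ℕ) j : k) := by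
        intro e
        rw [B, W_apply]
        exact if_pos rfl
      rw [Finset.sum_range]
      rw [← h1]
      apply Finset.sum_congr rfl
      intro e _
      rw [hBe e, ha]
      simp only [e.2, dif_pos, Fin.eta]
    · intro s _ hs
      apply Finset.sum_eq_zero
      intro e _
      rw [B, W_apply]
      have hne : ¬ (((⟨j + (s₀ : ℕ), hjn⟩ : Fin n) : ℕ) =
          ((⟨j, by omega⟩ : Fin n) : ℕ) + (s : ℕ)) := by
        simp only []
        intro hc
        exact hs (Fin.ext (by omega))
      rw [if_neg hne, mul_zero]
    · intro h
      exact absurd (Finset.mem_univ s₀) h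
  -- the associated polynomial vanishes at n - s₀ points
  set q : k[X] := ∑ e ∈ Finset.range (min (s₀ : ℕ) (n - 1 - (s₀ : ℕ)) + 1), a e • Cpoly k e
    with hq
  have hqdeg : q.natDegree ≤ min (s₀ : ℕ) (n - 1 - (s₀ : ℕ)) := by
    apply natDegree_sum_le_of_forall_le
    intro e he
    exact le_trans (natDegree_smul_le _ _)
      (by rw [Cpoly_natDegree]; exact Nat.lt_succ_iff.1 (Finset.mem_range.1 he))
  have hq0 : q = 0 := by
    apply eq_zero_of_natDegree_lt_card_of_eval_eq_zero q
      (f := fun i : Fin (n - (s₀ : ℕ)) => ((i : ℕ) : k))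
    · intro i1 i2 h12
      exact Fin.ext (Nat.cast_injective h12)
    · intro i
      rw [hq, eval_finset_sum]
      have h2 : ∀ e ∈ Finset.range (min (s₀ : ℕ) (n - 1 - (s₀ : ℕ)) + 1),
          (a e • Cpoly k e).eval ((i : ℕ) : k) = a e * (c e (i : ℕ) : k) := by
        intro e _
        rw [eval_smul, smul_eq_mul, Cpoly_eval]
      rw [Finset.sum_congr rfl h2]
      exact key (i : ℕ) (by omega)
    · rw [Fintype.card_fin]
      have hs₀ : (s₀ : ℕ) < n := s₀.2
      omega
  have ha0 := cpoly_indep _ a hq0 (e₀ : ℕ) (Nat.lt_succ_iff.1 e₀.2)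
  rw [ha] at ha0
  simp only [e₀.2, dif_pos, Fin.eta] at ha0
  exact ha0

lemma card_Idx : Fintype.card (Idx n) = ∑ s ∈ Finset.range n, (min s (n - 1 - s) + 1) := by
  rw [Fintype.card_sigma]
  have h1 : ∀ s : Fin n, Fintype.card (Fin (min (s : ℕ) (n - 1 - (s : ℕ)) + 1)) =
      min (s : ℕ) (n - 1 - (s : ℕ)) + 1 := fun s => Fintype.card_fin _
  rw [Finset.sum_congr rfl fun s _ => h1 s]
  exact Fin.sum_univ_eq_sum_range (fun s => min s (n - 1 - s) + 1) n

end JFB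

namespace JFB

lemma hsum_rec (N : ℕ) :
    ∑ s ∈ Finset.range (N + 2), min s (N + 1 - s) =
      (∑ s ∈ Finset.range N, min s (N - 1 - s)) + N := by
  rw [Finset.sum_range_succ, Finset.sum_range_succ']
  have h0 : min (N + 1) (N + 1 - (N + 1)) = 0 := by omega
  have h1 : min 0 (N + 1 - 0) = 0 := by omega
  rw [h0, h1, add_zero, add_zero]
  rw [Finset.sum_congr rfl (fun i hi => (by have := Finset.mem_range.1 hi; omega :
    min (i + 1) (N + 1 - (i + 1)) = min i (N - 1 - i) + 1))]
  rw [Finset.sum_add_distrib, Finset.sum_const, Finset.card_range, smul_eq_mul, mul_one]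

lemma hsum_both (m : ℕ) :
    (∑ s ∈ Finset.range (2 * m + 1), min s (2 * m + 1 - 1 - s) = m * m) ∧
    (∑ s ∈ Finset.range (2 * m + 2), min s (2 * m + 2 - 1 - s) = (m + 1) * m) := by
  induction m with
  | zero => constructor <;> decide
  | succ m ih =>
    constructor
    · have e1 : 2 * (m + 1) + 1 = 2 * m + 1 + 2 := by ring
      rw [e1]
      have e2 : ∀ s ∈ Finset.range (2 * m + 1 + 2),
          min s (2 * m + 1 + 2 - 1 - s) = min s (2 * m + 1 + 1 - s) := by
        intro s _; omega
      rw [Finset.sum_congr rfl e2, hsum_rec (2 * m + 1), ih.1]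
      ring
    · have e1 : 2 * (m + 1) + 2 = 2 * m + 2 + 2 := by ring
      rw [e1]
      have e2 : ∀ s ∈ Finset.range (2 * m + 2 + 2),
          min s (2 * m + 2 + 2 - 1 - s) = min s (2 * m + 2 + 1 - s) := by
        intro s _; omega
      rw [Finset.sum_congr rfl e2, hsum_rec (2 * m + 2), ih.2]
      ring

end JFB

open JFB

/-- Let `k` be a field of characteristic zero, `n ≥ 1`, and let
`A = Algebra.adjoin k {X⁰, J_n}` be the unital `k`-subalgebra of `n × n` matrices generated
by `X⁰` and `J_n`.  Then `dim_k A = (m+1)² = (n+1)²/4` if `n = 2m+1` is odd, and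
`dim_k A = m(m+1) = n(n+2)/4` if `n = 2m` is even. -/
theorem jordanian_full_block_image_dimension (k : Type*) [Field k] [CharZero k]
    (n : ℕ) (hn : 1 ≤ n)
    (A : Subalgebra k (Matrix (Fin n) (Fin n) k))
    (hA : A = Algebra.adjoin k {Xzero k n, jordanBlock k n}) :
    (∀ m : ℕ, n = 2 * m + 1 → Module.finrank k A = (m + 1) ^ 2) ∧
    (∀ m : ℕ, n = 2 * m → Module.finrank k A = m * (m + 1)) := by
  have hJmem : jordanBlock k n ∈ A := by
    rw [hA]; exact Algebra.subset_adjoin (by simp)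
  have hXmem : Xzero k n ∈ A := by
    rw [hA]; exact Algebra.subset_adjoin (by simp)
  -- the span is contained in A
  have hSA : S k n ≤ Subalgebra.toSubmodule A := by
    rw [S, Submodule.span_le]
    rintro x ⟨⟨s, e⟩, rfl⟩
    have he : (e : ℕ) ≤ (s : ℕ) := by have := e.2; omega
    have hB : B k n ⟨s, e⟩ =
        (jordanBlock k n) ^ ((s : ℕ) - (e : ℕ)) * (Xzero k n) ^ (e : ℕ) := by
      rw [J_pow, X_pow, W_mul, B]
      have harg : (s : ℕ) - (e : ℕ) + (e : ℕ) = (s : ℕ) := by omega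
      rw [harg]
      exact W_congr fun j _ => (mul_one _).symm
    rw [SetLike.mem_coe, Subalgebra.mem_toSubmodule, hB]
    exact mul_mem (pow_mem hJmem _) (pow_mem hXmem _)
  -- A is contained in the span
  set Salg : Subalgebra k (Matrix (Fin n) (Fin n) k) :=
    (S k n).toSubalgebra (one_mem_S hn) (fun x y hx hy => mul_mem_S hx hy) with hSalg
  have hXS : Xzero k n ∈ S k n := by
    have h1 : Xzero k n = W k n (fun j => (Polynomial.X : Polynomial k).eval ((j : ℕ) : k)) 1 := by
      have h2 : (fun j : ℕ => (Polynomial.X : Polynomial k).eval ((j : ℕ) : k)) =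
          fun j : ℕ => ((j : ℕ) : k) := funext fun j => Polynomial.eval_X
      rw [h2]; rfl
    rw [h1]
    exact W_eval_mem _ (by simp [Polynomial.natDegree_X])
  have hJS : jordanBlock k n ∈ S k n := by
    have h1 : jordanBlock k n =
        W k n (fun j => (1 : Polynomial k).eval ((j : ℕ) : k)) 1 := by
      have h2 : (fun j : ℕ => (1 : Polynomial k).eval ((j : ℕ) : k)) =
          fun _ : ℕ => (1 : k) := funext fun j => Polynomial.eval_one
      rw [h2]; rfl
    rw [h1]
    exact W_eval_mem _ (by simp)
  have hgen : ({Xzero k n, jordanBlock k n} : Set (Matrix (Fin n) (Fin n) k)) ⊆ Salg := by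
    rintro x (rfl | rfl)
    · exact hXS
    · exact hJS
  have hle : A ≤ Salg := by rw [hA]; exact Algebra.adjoin_le hgen
  have hAS : Subalgebra.toSubmodule A ≤ S k n := by
    have h3 := Subalgebra.toSubmodule.monotone hle
    rwa [hSalg, Submodule.toSubalgebra_toSubmodule] at h3
  have hmain : Subalgebra.toSubmodule A = S k n := le_antisymm hAS hSA
  have hfr : Module.finrank k A = Fintype.card (Idx n) := by
    rw [← Subalgebra.finrank_toSubmodule, hmain, S]
    exact finrank_span_eq_card B_indep
  rw [hfr, card_Idx]
  constructor
  · intro m hm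
    subst hm
    rw [Finset.sum_add_distrib, Finset.sum_const, Finset.card_range, smul_eq_mul,
      mul_one, (hsum_both m).1]
    ring
  · intro m hm
    subst hm
    obtain ⟨m', rfl⟩ : ∃ m', m = m' + 1 := ⟨m - 1, by omega⟩
    have e1 : 2 * (m' + 1) = 2 * m' + 2 := by ring
    rw [e1, Finset.sum_add_distrib, Finset.sum_const, Finset.card_range, smul_eq_mul,
      mul_one, (hsum_both m').2]
    ring
end

section
/- Let k be an algebraically closed field of characteristic zero and let X and Y be n×n matrices over k satisfying X*Y − Y*X = Y^2. Then X and Y can be simultaneously triangularized: there exists an invertible n×n matrix P such that both P*X*P⁻¹ and P*Y*P⁻¹ are upper triangular, i.e. all their entries strictly below the main diagonal vanish. -/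
open Matrix

namespace JordanianAux

variable {k : Type*} [Field k]

/-- Block diagonal matrix `1 ⊕ Z`. -/
def embMat {n : ℕ} (Z : Matrix (Fin n) (Fin n) k) : Matrix (Fin (n+1)) (Fin (n+1)) k :=
  Matrix.of fun i j =>
    Fin.cases (Fin.cases 1 (fun _ => 0) j) (fun i' => Fin.cases 0 (fun j' => Z i' j') j) i

@[simp] lemma embMat_zero_zero {n : ℕ} (Z : Matrix (Fin n) (Fin n) k) :
    embMat Z 0 0 = 1 := rfl

@[simp] lemma embMat_zero_succ {n : ℕ} (Z : Matrix (Fin n) (Fin n) k) (j : Fin n) :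
    embMat Z 0 j.succ = 0 := by simp [embMat]

@[simp] lemma embMat_succ_zero {n : ℕ} (Z : Matrix (Fin n) (Fin n) k) (i : Fin n) :
    embMat Z i.succ 0 = 0 := by simp [embMat]

@[simp] lemma embMat_succ_succ {n : ℕ} (Z : Matrix (Fin n) (Fin n) k) (i j : Fin n) :
    embMat Z i.succ j.succ = Z i j := by simp [embMat]

lemma embMat_mul {n : ℕ} (Z W : Matrix (Fin n) (Fin n) k) :
    embMat Z * embMat W = embMat (Z * W) := by
  ext i j
  rw [Matrix.mul_apply, Fin.sum_univ_succ]
  induction i using Fin.cases with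
  | zero =>
      induction j using Fin.cases with
      | zero => simp
      | succ j' => simp
  | succ i' =>
      induction j using Fin.cases with
      | zero => simp
      | succ j' => simp [Matrix.mul_apply]

lemma embMat_one {n : ℕ} : embMat (1 : Matrix (Fin n) (Fin n) k) = 1 := by
  ext i j
  induction i using Fin.cases with
  | zero =>
      induction j using Fin.cases with
      | zero => simp
      | succ j' => simp [Matrix.one_apply, (Fin.succ_ne_zero j').symm]
  | succ i' =>
      induction j using Fin.cases with
      | zero => simp [Matrix.one_apply, Fin.succ_ne_zero i']
      | succ j' => simp [Matrix.one_apply, Fin.succ_inj]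

/-- The lower-right `n × n` block. -/
def cutMat {n : ℕ} (A : Matrix (Fin (n+1)) (Fin (n+1)) k) : Matrix (Fin n) (Fin n) k :=
  Matrix.of fun (i j : Fin n) => A i.succ j.succ

lemma cutMat_mul {n : ℕ} (A B : Matrix (Fin (n+1)) (Fin (n+1)) k)
    (hA : ∀ i : Fin n, A i.succ 0 = 0) :
    cutMat (A * B) = cutMat A * cutMat B := by
  ext i j
  rw [cutMat, Matrix.of_apply, Matrix.mul_apply, Fin.sum_univ_succ, hA, zero_mul, zero_add]
  rfl

lemma cutMat_sub {n : ℕ} (A B : Matrix (Fin (n+1)) (Fin (n+1)) k) :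
    cutMat (A - B) = cutMat A - cutMat B := rfl

section CD

variable {m : ℕ} (v : Fin (m+1) → k) (p : Fin (m+1))

/-- Basis-change matrix: column 0 is `v`, column `j ≠ 0` is `e_{swap 0 p j}`. -/
def Cmat : Matrix (Fin (m+1)) (Fin (m+1)) k :=
  Matrix.of fun i j => if j = 0 then v i else if i = Equiv.swap 0 p j then 1 else 0

/-- Inverse of `Cmat`. -/
def Dmat : Matrix (Fin (m+1)) (Fin (m+1)) k :=
  Matrix.of fun i j =>
    if j = p then (if i = 0 then (v p)⁻¹ else -(v (Equiv.swap 0 p i)) * (v p)⁻¹)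
    else if i = Equiv.swap 0 p j then 1 else 0

lemma swap_ne_zero_iff (p : Fin (m+1)) {l : Fin (m+1)} :
    Equiv.swap (0 : Fin (m+1)) p l ≠ 0 ↔ l ≠ p := by
  rw [Ne, Ne, Equiv.swap_apply_eq_iff, Equiv.swap_apply_left]

lemma Cmat_mul_Dmat (hp : v p ≠ 0) : Cmat v p * Dmat v p = 1 := by
  ext i l
  rw [Matrix.mul_apply]
  by_cases hl : l = p
  · subst hl
    rw [Fin.sum_univ_succ]
    have h0 : Cmat v l i 0 * Dmat v l 0 l = v i * (v l)⁻¹ := by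
      simp [Cmat, Dmat]
    rw [h0]
    have hterm : ∀ x : Fin m,
        Cmat v l i x.succ * Dmat v l x.succ l
          = if x.succ = Equiv.swap 0 l i then -(v i) * (v l)⁻¹ else 0 := by
      intro x
      simp only [Cmat, Dmat, Matrix.of_apply, if_neg (Fin.succ_ne_zero x), if_pos rfl]
      by_cases hx : i = Equiv.swap 0 l x.succ
      · have hx' : x.succ = Equiv.swap 0 l i := by
          rw [hx, Equiv.swap_apply_self]
        simp [hx]
      · have hx' : ¬ x.succ = Equiv.swap 0 l i := fun hc => hx (by rw [hc, Equiv.swap_apply_self])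
        simp [Fin.succ_ne_zero x, hx, hx']
    rw [Finset.sum_congr rfl fun x _ => hterm x]
    by_cases hi : i = l
    · subst hi
      have hsw : Equiv.swap (0 : Fin (m+1)) i i = 0 := Equiv.swap_apply_right 0 i
      rw [hsw]
      rw [Finset.sum_eq_zero fun x _ => if_neg (Fin.succ_ne_zero x)]
      rw [Matrix.one_apply_eq, add_zero, mul_inv_cancel₀ hp]
    · have hs : Equiv.swap 0 l i ≠ 0 := (swap_ne_zero_iff l).mpr hi
      have hrev : Equiv.swap 0 l i = (Fin.pred (Equiv.swap 0 l i) hs).succ :=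
        (Fin.succ_pred _ hs).symm
      rw [Matrix.one_apply_ne hi]
      rw [hrev]
      have hcongr : ∀ x : Fin m, (if x.succ = (Fin.pred (Equiv.swap 0 l i) hs).succ
          then -(v i) * (v l)⁻¹ else 0)
          = if x = Fin.pred (Equiv.swap 0 l i) hs then -(v i) * (v l)⁻¹ else 0 := by
        intro x
        exact if_congr Fin.succ_inj rfl rfl
      rw [Finset.sum_congr rfl fun x _ => hcongr x, Finset.sum_ite_eq']
      simp [mul_comm]
  · have hD : ∀ x : Fin (m+1), Dmat v p x l = if x = Equiv.swap 0 p l then 1 else 0 := by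
      intro x
      simp [Dmat, hl]
    have hterm : ∀ x : Fin (m+1),
        Cmat v p i x * Dmat v p x l
          = if x = Equiv.swap 0 p l then Cmat v p i x else 0 := by
      intro x
      rw [hD]
      by_cases hx : x = Equiv.swap 0 p l <;> simp [hx]
    rw [Finset.sum_congr rfl fun x _ => hterm x, Finset.sum_ite_eq']
    have hs : Equiv.swap 0 p l ≠ 0 := (swap_ne_zero_iff p).mpr hl
    simp only [Finset.mem_univ, if_pos]
    rw [Cmat, Matrix.of_apply, if_neg hs, Equiv.swap_apply_self]
    by_cases hil : i = l <;> simp [hil, Matrix.one_apply]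

lemma Dmat_mul_Cmat (hp : v p ≠ 0) : Dmat v p * Cmat v p = 1 := by
  ext i l
  rw [Matrix.mul_apply]
  by_cases hl : l = 0
  · subst hl
    have hC : ∀ x : Fin (m+1), Cmat v p x 0 = v x := by intro x; simp [Cmat]
    simp only [hC]
    rw [← Finset.add_sum_erase Finset.univ _ (Finset.mem_univ p)]
    have hterm : ∀ x ∈ Finset.univ.erase p,
        Dmat v p i x * v x = if x = Equiv.swap 0 p i then v x else 0 := by
      intro x hx
      have hxp : x ≠ p := Finset.ne_of_mem_erase hx
      simp only [Dmat, Matrix.of_apply, if_neg hxp]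
      by_cases hix : i = Equiv.swap 0 p x
      · have hxi : x = Equiv.swap 0 p i := by rw [hix, Equiv.swap_apply_self]
        rw [if_pos hix, if_pos hxi, one_mul]
      · have hxi : ¬ x = Equiv.swap 0 p i := fun hc => hix (by rw [hc, Equiv.swap_apply_self])
        rw [if_neg hix, if_neg hxi, zero_mul]
    rw [Finset.sum_congr rfl hterm, Finset.sum_ite_eq']
    by_cases hi : i = 0
    · subst hi
      have h1 : Dmat v p 0 p = (v p)⁻¹ := by simp [Dmat]
      have h2 : Equiv.swap (0 : Fin (m+1)) p 0 = p := Equiv.swap_apply_left 0 p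
      have h3 : Equiv.swap (0 : Fin (m+1)) p 0 ∉ Finset.univ.erase p := by
        simp [h2]
      rw [h1, if_neg h3, add_zero, inv_mul_cancel₀ hp, Matrix.one_apply_eq]
    · have h1 : Dmat v p i p = -(v (Equiv.swap 0 p i)) * (v p)⁻¹ := by
        simp [Dmat, hi]
      have h2 : Equiv.swap 0 p i ∈ Finset.univ.erase p := by
        refine Finset.mem_erase.mpr ⟨?_, Finset.mem_univ _⟩
        intro hc
        have := congrArg (Equiv.swap 0 p) hc
        rw [Equiv.swap_apply_self, Equiv.swap_apply_right] at this
        exact hi this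
      rw [h1, if_pos h2, Matrix.one_apply_ne hi]
      simp [mul_assoc, inv_mul_cancel₀ hp]
  · have hterm : ∀ x : Fin (m+1),
        Dmat v p i x * Cmat v p x l = if x = Equiv.swap 0 p l then Dmat v p i x else 0 := by
      intro x
      have hc : Cmat v p x l = if x = Equiv.swap 0 p l then 1 else 0 := by
        simp [Cmat, hl]
      rw [hc]
      by_cases hx : x = Equiv.swap 0 p l <;> simp [hx]
    rw [Finset.sum_congr rfl fun x _ => hterm x, Finset.sum_ite_eq']
    have hsp : Equiv.swap 0 p l ≠ p := by
      intro hc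
      have := congrArg (Equiv.swap 0 p) hc
      rw [Equiv.swap_apply_self, Equiv.swap_apply_right] at this
      exact hl this
    simp only [Finset.mem_univ, if_pos]
    rw [Dmat, Matrix.of_apply, if_neg hsp, Equiv.swap_apply_self]
    by_cases hil : i = l <;> simp [hil, Matrix.one_apply]

lemma Cmat_mulVec_single : Cmat v p *ᵥ Pi.single 0 1 = v := by
  ext i
  rw [Matrix.mulVec_single]
  simp [Cmat]

end CD

section Conj

variable {n : ℕ}

lemma embMul_succ_zero (P : Matrix (Fin n) (Fin n) k) (A : Matrix (Fin (n+1)) (Fin (n+1)) k)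
    (hA : ∀ i : Fin n, A i.succ 0 = 0) (i : Fin n) : (embMat P * A) i.succ 0 = 0 := by
  rw [Matrix.mul_apply, Fin.sum_univ_succ, embMat_succ_zero, zero_mul, zero_add]
  exact Finset.sum_eq_zero fun x _ => by rw [hA, mul_zero]

lemma cutMat_embMat (P : Matrix (Fin n) (Fin n) k) : cutMat (embMat P) = P := by
  ext i j
  simp [cutMat]

lemma conj_succ_zero (P Q : Matrix (Fin n) (Fin n) k) (A : Matrix (Fin (n+1)) (Fin (n+1)) k)
    (hA : ∀ i : Fin n, A i.succ 0 = 0) (i : Fin n) :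
    (embMat P * A * embMat Q) i.succ 0 = 0 := by
  rw [Matrix.mul_apply, Fin.sum_univ_succ]
  rw [embMul_succ_zero P A hA, zero_mul, zero_add]
  exact Finset.sum_eq_zero fun x _ => by rw [embMat_succ_zero, mul_zero]

lemma conj_cut (P Q : Matrix (Fin n) (Fin n) k) (A : Matrix (Fin (n+1)) (Fin (n+1)) k)
    (hA : ∀ i : Fin n, A i.succ 0 = 0) :
    cutMat (embMat P * A * embMat Q) = P * cutMat A * Q := by
  rw [cutMat_mul (embMat P * A) (embMat Q) (embMul_succ_zero P A hA),
    cutMat_mul (embMat P) A (fun i => embMat_succ_zero P i), cutMat_embMat, cutMat_embMat]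

lemma conj_blockTriangular (P Q : Matrix (Fin n) (Fin n) k)
    (A : Matrix (Fin (n+1)) (Fin (n+1)) k)
    (hA : ∀ i : Fin n, A i.succ 0 = 0)
    (ht : (P * cutMat A * Q).BlockTriangular id) :
    (embMat P * A * embMat Q).BlockTriangular id := by
  intro i j hij
  induction i using Fin.cases with
  | zero => exact absurd hij (by simp)
  | succ i' =>
    induction j using Fin.cases with
    | zero => exact conj_succ_zero P Q A hA i'
    | succ j' =>
      have he : (embMat P * A * embMat Q) i'.succ j'.succ = (P * cutMat A * Q) i' j' := by
        rw [← conj_cut P Q A hA]; rfl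
      rw [he]
      exact ht (Fin.succ_lt_succ_iff.mp hij)

end Conj

theorem aux [IsAlgClosed k] [CharZero k] :
    ∀ (n : ℕ) (X Y : Matrix (Fin n) (Fin n) k), X * Y - Y * X = Y ^ 2 →
      ∃ P Q : Matrix (Fin n) (Fin n) k, P * Q = 1 ∧ Q * P = 1 ∧
        (P * X * Q).BlockTriangular id ∧ (P * Y * Q).BlockTriangular id := by
  intro n
  induction n with
  | zero =>
      intro X Y _
      exact ⟨1, 1, by simp, by simp, fun i _ _ => i.elim0, fun i _ _ => i.elim0⟩
  | succ n ih =>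
      intro X Y h
      -- the kernel of `Y` is nontrivial
      have hker : LinearMap.ker Y.mulVecLin ≠ ⊥ := by
        intro hbot
        have hinj : Function.Injective Y.mulVecLin := LinearMap.ker_eq_bot.mp hbot
        have hinj' : Function.Injective Y.mulVec := fun a b hab => hinj (by simpa using hab)
        have hY : IsUnit Y := Matrix.mulVec_injective_iff_isUnit.mp hinj'
        have hdet : IsUnit Y.det := (Matrix.isUnit_iff_isUnit_det Y).mp hY
        have h1 : Y * Y⁻¹ = 1 := Matrix.mul_nonsing_inv Y hdet
        have h2 : Y⁻¹ * Y = 1 := Matrix.nonsing_inv_mul Y hdet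
        have e1 : (X * Y - Y * X) * (Y⁻¹ * Y⁻¹) = 1 := by
          rw [h, pow_two, mul_assoc, ← mul_assoc Y Y⁻¹, h1, one_mul, h1]
        have e2 : X * Y * (Y⁻¹ * Y⁻¹) = X * Y⁻¹ := by
          rw [mul_assoc X Y, ← mul_assoc Y Y⁻¹, h1, one_mul]
        have e3 : Matrix.trace (Y * X * (Y⁻¹ * Y⁻¹)) = Matrix.trace (X * Y⁻¹) := by
          rw [Matrix.trace_mul_comm]
          have e4 : Y⁻¹ * Y⁻¹ * (Y * X) = Y⁻¹ * X := by
            rw [mul_assoc, ← mul_assoc Y⁻¹ Y X, h2, one_mul]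
          rw [e4, Matrix.trace_mul_comm]
        have tr1 : Matrix.trace ((X * Y - Y * X) * (Y⁻¹ * Y⁻¹)) = 0 := by
          rw [sub_mul, Matrix.trace_sub, e2, e3, sub_self]
        have tr2 : Matrix.trace ((X * Y - Y * X) * (Y⁻¹ * Y⁻¹)) = ((n + 1 : ℕ) : k) := by
          rw [e1, Matrix.trace_one]
          simp
        exact Nat.cast_ne_zero.mpr n.succ_ne_zero (tr2.symm.trans tr1)
      -- the kernel is invariant under `X`
      have hXK : ∀ w ∈ LinearMap.ker Y.mulVecLin,
          X.mulVecLin w ∈ LinearMap.ker Y.mulVecLin := by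
        intro w hw
        rw [LinearMap.mem_ker, Matrix.mulVecLin_apply] at hw ⊢
        rw [Matrix.mulVecLin_apply, Matrix.mulVec_mulVec]
        have hYX : Y * X = X * Y - Y ^ 2 := by rw [← h, sub_sub_cancel]
        rw [hYX, Matrix.sub_mulVec, pow_two, ← Matrix.mulVec_mulVec,
          ← Matrix.mulVec_mulVec, hw, Matrix.mulVec_zero, Matrix.mulVec_zero, sub_zero]
      haveI : Nontrivial (LinearMap.ker Y.mulVecLin) :=
        Submodule.nontrivial_iff_ne_bot.mpr hker
      obtain ⟨μ, hμ⟩ := Module.End.exists_eigenvalue (X.mulVecLin.restrict hXK)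
      obtain ⟨w, hw⟩ := hμ.exists_hasEigenvector
      set v : Fin (n+1) → k := (w : Fin (n+1) → k) with hvdef
      have hv0 : v ≠ 0 := by
        intro hc
        rw [hvdef] at hc
        exact hw.right (Submodule.coe_eq_zero.mp hc)
      have hYv : Y *ᵥ v = 0 := by
        have hmem := w.property
        rw [LinearMap.mem_ker, Matrix.mulVecLin_apply] at hmem
        rw [hvdef]
        exact hmem
      have hXv : X *ᵥ v = μ • v := by
        have h2 := congrArg (Subtype.val) hw.apply_eq_smul
        rw [LinearMap.restrict_coe_apply, Matrix.mulVecLin_apply,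
          Submodule.coe_smul] at h2
        rw [hvdef]
        exact h2
      obtain ⟨p, hp⟩ := Function.ne_iff.mp hv0
      have hp : v p ≠ 0 := by simpa using hp
      have hCD : Cmat v p * Dmat v p = 1 := Cmat_mul_Dmat v p hp
      have hDC : Dmat v p * Cmat v p = 1 := Dmat_mul_Cmat v p hp
      set C := Cmat v p
      set D := Dmat v p
      have key : ∀ A B : Matrix (Fin (n+1)) (Fin (n+1)) k,
          (D * A * C) * (D * B * C) = D * (A * B) * C := by
        intro A B
        calc D * A * C * (D * B * C) = D * (A * ((C * D) * (B * C))) := by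
              simp only [Matrix.mul_assoc]
          _ = D * (A * B) * C := by rw [hCD, one_mul]; simp only [Matrix.mul_assoc]
      have hrel : (D*X*C) * (D*Y*C) - (D*Y*C) * (D*X*C) = (D*Y*C) ^ 2 := by
        rw [key, key, ← sub_mul, ← Matrix.mul_sub, h, pow_two, pow_two, key]
      set e0 : Fin (n+1) → k := Pi.single 0 1 with he0
      have hC0 : C *ᵥ e0 = v := Cmat_mulVec_single v p
      have hDv : D *ᵥ v = e0 := by
        rw [← hC0, Matrix.mulVec_mulVec, hDC, Matrix.one_mulVec]
      have hYcol : ∀ i : Fin (n+1), (D*Y*C) i 0 = 0 := by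
        intro i
        have hmv : (D*Y*C) *ᵥ e0 = 0 := by
          rw [← Matrix.mulVec_mulVec, ← Matrix.mulVec_mulVec, hC0, hYv,
            Matrix.mulVec_zero]
        rw [he0, Matrix.mulVec_single] at hmv
        have := congrFun hmv i
        simpa using this
      have hYcol' : ∀ i : Fin n, (D*Y*C) i.succ 0 = 0 := fun i => hYcol i.succ
      have hXcol : ∀ i : Fin n, (D*X*C) i.succ 0 = 0 := by
        intro i
        have hmv : (D*X*C) *ᵥ e0 = μ • e0 := by
          rw [← Matrix.mulVec_mulVec, ← Matrix.mulVec_mulVec, hC0, hXv,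
            Matrix.mulVec_smul, hDv]
        rw [he0, Matrix.mulVec_single] at hmv
        have h5 := congrFun hmv i.succ
        rw [Pi.smul_apply, MulOpposite.op_one, one_smul, Matrix.col_apply] at h5
        rw [h5, Pi.smul_apply, Pi.single_eq_of_ne (Fin.succ_ne_zero i), smul_zero]
      have hrel' : cutMat (D*X*C) * cutMat (D*Y*C) - cutMat (D*Y*C) * cutMat (D*X*C)
          = cutMat (D*Y*C) ^ 2 := by
        rw [← cutMat_mul _ _ hXcol, ← cutMat_mul _ _ hYcol', ← cutMat_sub, hrel,
          pow_two, pow_two, ← cutMat_mul _ _ hYcol']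
      obtain ⟨P', Q', hPQ', hQP', htX', htY'⟩ := ih (cutMat (D*X*C)) (cutMat (D*Y*C)) hrel'
      refine ⟨embMat P' * D, C * embMat Q', ?_, ?_, ?_, ?_⟩
      · calc embMat P' * D * (C * embMat Q')
            = embMat P' * ((D * C) * embMat Q') := by simp only [Matrix.mul_assoc]
          _ = 1 := by rw [hDC, one_mul, embMat_mul, hPQ', embMat_one]
      · calc C * embMat Q' * (embMat P' * D)
            = C * ((embMat Q' * embMat P') * D) := by simp only [Matrix.mul_assoc]
          _ = 1 := by rw [embMat_mul, hQP', embMat_one, one_mul, hCD]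
      · have hE : embMat P' * D * X * (C * embMat Q')
            = embMat P' * (D * X * C) * embMat Q' := by simp only [Matrix.mul_assoc]
        rw [hE]
        exact conj_blockTriangular P' Q' _ hXcol htX'
      · have hE : embMat P' * D * Y * (C * embMat Q')
            = embMat P' * (D * Y * C) * embMat Q' := by simp only [Matrix.mul_assoc]
        rw [hE]
        exact conj_blockTriangular P' Q' _ hYcol' htY'

end JordanianAux

/-- Let `k` be an algebraically closed field of characteristic zero and `X`,
`Y` be `n × n` matrices over `k` with `X*Y - Y*X = Y^2`.  Then `X` and `Y` can be
simultaneously triangularized: there is an invertible matrix `P` such that `P*X*P⁻¹` and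
`P*Y*P⁻¹` are both upper triangular (all entries strictly below the diagonal vanish). -/
theorem jordanian_simultaneous_triangularization
    (k : Type*) [Field k] [IsAlgClosed k] [CharZero k]
    (n : ℕ) (hn : 1 ≤ n) (X Y : Matrix (Fin n) (Fin n) k)
    (h : X * Y - Y * X = Y ^ 2) :
    ∃ P : Matrix (Fin n) (Fin n) k, IsUnit P ∧
      (P * X * P⁻¹).BlockTriangular id ∧ (P * Y * P⁻¹).BlockTriangular id := by
  obtain ⟨P, Q, hPQ, hQP, h1, h2⟩ := JordanianAux.aux n X Y h
  have hu : IsUnit P := by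
    have hdet : IsUnit P.det :=
      IsUnit.of_mul_eq_one Q.det (by rw [← Matrix.det_mul, hPQ, Matrix.det_one])
    exact (Matrix.isUnit_iff_isUnit_det P).mpr hdet
  have hinv : P⁻¹ = Q := Matrix.inv_eq_right_inv hPQ
  exact ⟨P, hu, by rw [hinv]; exact h1, by rw [hinv]; exact h2⟩
end
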